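/- arXiv:1606.03791 — 4 statements merged into one kernel-verified Lean document; each statement's English description precedes it below -/
import Mathlib

section
/- Let M be a positive integer and q ∈ (1, M+1]. If for every r ∈ (q, M+1] the Hausdorff dimension of U ∩ (q, r) is strictly positive, then q ∈ U, i.e., 1 has a unique q-expansion. In fact, the paper proves the contrapositive in the stronger form: if q ∉ U then U ∩ (q, r) = ∅ for some r ∈ (q, M+1]. -/
open Set MeasureTheory Filter

noncomputable section

/-- The projection `π_q` of a digit sequence (0-indexed): `∑ d i / q^(i+1)`. -/
def piQ (q : ℝ) (d : ℕ → ℕ) : ℝ := ∑' i : ℕ, (d i : ℝ) / q ^ (i + 1)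

/-- `d` is a `q`-expansion of `x` over the alphabet `{0,…,M}`. -/
def IsExpansion (M : ℕ) (q x : ℝ) (d : ℕ → ℕ) : Prop :=
  (∀ i, d i ≤ M) ∧ piQ q d = x

/-- `U'_q`: digit sequences that are the unique `q`-expansion of their projection. -/
def UnivSeqs (M : ℕ) (q : ℝ) : Set (ℕ → ℕ) :=
  {d | (∀ i, d i ≤ M) ∧ ∀ e : ℕ → ℕ, IsExpansion M q (piQ q d) e → e = d}

/-- The set `U = U(M)` of univoque bases: `q ∈ (1, M+1]` such that `1` has a
unique `q`-expansion over `{0,…,M}`. -/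
def UnivBases (M : ℕ) : Set ℝ :=
  {q | 1 < q ∧ q ≤ M + 1 ∧ ∃! d : ℕ → ℕ, IsExpansion M q 1 d}

/-- The Komornik–Loreti constant `q'(M) = min U(M)`. -/
def KL (M : ℕ) : ℝ := sInf (UnivBases M)

/-- `(a, b)` is a connected component of `(q'(M), M+1) \ closure (U(M))`:
an open subinterval whose endpoints do not lie in that (open) set. -/
def CC (M : ℕ) (a b : ℝ) : Prop :=
  a < b ∧ Ioo a b ⊆ Ioo (KL M) (M + 1) \ closure (UnivBases M) ∧
    a ∉ Ioo (KL M) (M + 1) \ closure (UnivBases M) ∧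
    b ∉ Ioo (KL M) (M + 1) \ closure (UnivBases M)

/-- `x ∈ [0, M/(q-1)]` has exactly two distinct `q`-expansions. -/
def HasExactlyTwoExpansions (M : ℕ) (q x : ℝ) : Prop :=
  ∃ c d : ℕ → ℕ, c ≠ d ∧ IsExpansion M q x c ∧ IsExpansion M q x d ∧
    ∀ e : ℕ → ℕ, IsExpansion M q x e → e = c ∨ e = d

/-- `B_2(M)`: bases `q ∈ (1, M+1]` for which some `x ∈ [0, M/(q-1)]` has exactly
two `q`-expansions. -/
def B2 (M : ℕ) : Set ℝ :=
  {q | 1 < q ∧ q ≤ M + 1 ∧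
    ∃ x ∈ Icc (0 : ℝ) (M / (q - 1)), HasExactlyTwoExpansions M q x}

/-- Strict lexicographic order on digit sequences. -/
def seqLt (a b : ℕ → ℕ) : Prop := ∃ n, (∀ i < n, a i = b i) ∧ a n < b n

/-- Lexicographic order on digit sequences. -/
def seqLe (a b : ℕ → ℕ) : Prop := seqLt a b ∨ a = b

/-- A digit sequence is infinite if it does not end with `0^∞` after a last
nonzero digit (in particular `0^∞` is infinite). -/
def IsInfiniteSeq (a : ℕ → ℕ) : Prop := ¬∃ m, a m ≠ 0 ∧ ∀ i > m, a i = 0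

/-- `a = α(q)`, the quasi-greedy `q`-expansion of `1`: the lexicographically
largest infinite `q`-expansion of `1`. -/
def IsQuasiGreedy (M : ℕ) (q : ℝ) (a : ℕ → ℕ) : Prop :=
  IsExpansion M q 1 a ∧ IsInfiniteSeq a ∧
    ∀ b : ℕ → ℕ, IsExpansion M q 1 b → IsInfiniteSeq b → seqLe b a

/-- `b = β(q)`, the greedy `q`-expansion of `1`: the lexicographically largest
`q`-expansion of `1`. -/
def IsGreedy (M : ℕ) (q : ℝ) (b : ℕ → ℕ) : Prop :=
  IsExpansion M q 1 b ∧ ∀ c : ℕ → ℕ, IsExpansion M q 1 c → seqLe c b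

/-- `w⁺`: increase the last digit of a word by one. -/
def plusWord : List ℕ → List ℕ
  | [] => []
  | [a] => [a + 1]
  | a :: b :: rest => a :: plusWord (b :: rest)

/-- `w⁻`: decrease the last digit of a word by one. -/
def minusWord : List ℕ → List ℕ
  | [] => []
  | [a] => [a - 1]
  | a :: b :: rest => a :: minusWord (b :: rest)

/-- The reflection of a word: `\overline{w} = (M - w_1) ⋯ (M - w_k)`. -/
def reflWord (M : ℕ) (w : List ℕ) : List ℕ := w.map fun a => M - a

/-- The substitution `g(w) = w⁺ \overline{w⁺}`. -/
def gWord (M : ℕ) (w : List ℕ) : List ℕ := plusWord w ++ reflWord M (plusWord w)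

/-- The periodic sequence `t^∞` determined by a word `t`. -/
def periodicSeq (t : List ℕ) (i : ℕ) : ℕ := t.getD (i % t.length) 0

/-- Strict lexicographic order on words. -/
def wordLt (u v : List ℕ) : Prop := List.Lex (· < ·) u v

/-- Lexicographic order on words. -/
def wordLe (u v : List ℕ) : Prop := wordLt u v ∨ u = v

/-- The connected component `(q_0, q_0^*)` of `(q'(M), M+1) \ closure (U(M))` is
generated by the word `t`, and `θ = α(q_0^*)`: `α(q_0) = t^∞` and
`α(q_0^*) = lim_{n→∞} g^n(t)`, i.e. every `g^n(t)` is a prefix of `θ`. -/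
def GeneratedBy (M : ℕ) (q₀ q₀star : ℝ) (t : List ℕ) (θ : ℕ → ℕ) : Prop :=
  CC M q₀ q₀star ∧ t ≠ [] ∧ IsQuasiGreedy M q₀ (periodicSeq t) ∧
    IsQuasiGreedy M q₀star θ ∧
    ∀ n : ℕ, ∀ i < ((gWord M)^[n] t).length, ((gWord M)^[n] t).getD i 0 = θ i


namespace S3aux

variable {M : ℕ} {q p y : ℝ} {d : ℕ → ℕ}

lemma summ (hq : 1 < q) (hd : ∀ i, d i ≤ M) :
    Summable (fun i => (d i : ℝ) / q ^ (i + 1)) := by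
  have hq0 : 0 < q := lt_trans one_pos hq
  refine Summable.of_nonneg_of_le (fun i => by positivity)
    (fun i => ?_) (((summable_geometric_of_lt_one (by positivity)
      ((div_lt_one hq0).2 hq)).mul_left (M : ℝ)))
  have h1 : (d i : ℝ) ≤ M := Nat.cast_le.2 (hd i)
  have hpow : (0:ℝ) < q ^ (i+1) := pow_pos hq0 _
  have hpow2 : (0:ℝ) < q ^ i := pow_pos hq0 _
  have key : (d i : ℝ) / q ^ (i + 1) ≤ (M : ℝ) / q ^ i := by
    rw [div_le_div_iff₀ hpow hpow2]
    calc (d i : ℝ) * q ^ i ≤ (M:ℝ) * q ^ i := by gcongr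
      _ ≤ (M:ℝ) * q ^ (i+1) := by
          have h3 : q ^ i ≤ q ^ (i+1) := pow_le_pow_right₀ hq.le (by omega)
          exact mul_le_mul_of_nonneg_left h3 (Nat.cast_nonneg M)
  refine key.trans (le_of_eq ?_)
  rw [one_div, inv_pow, mul_comm, inv_mul_eq_div]

lemma piQ_const_M (hq : 1 < q) : piQ q (fun _ => M) = M / (q - 1) := by
  have hq0 : 0 < q := lt_trans one_pos hq
  have h : ∀ i : ℕ, (M : ℝ) / q ^ (i + 1) = (M / q) * (1 / q) ^ i := by
    intro i
    rw [one_div, inv_pow, ← div_eq_mul_inv, div_div, pow_succ]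
    ring_nf
  unfold piQ
  simp only [h]
  rw [tsum_mul_left, tsum_geometric_of_lt_one (by positivity) ((div_lt_one hq0).2 hq)]
  have : (1 : ℝ) - 1/q = (q - 1)/q := by field_simp
  rw [this]
  field_simp

lemma piQ_nonneg (hq : 1 < q) : 0 ≤ piQ q d :=
  tsum_nonneg (fun i => by positivity)

lemma piQ_le (hq : 1 < q) (hd : ∀ i, d i ≤ M) : piQ q d ≤ M / (q - 1) := by
  rw [← piQ_const_M hq]
  exact Summable.tsum_le_tsum (fun i => by
      gcongr
      exact_mod_cast hd i)
    (summ hq hd) (summ hq (fun _ => le_refl M))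

lemma piQ_split (hq : 1 < q) (hd : ∀ i, d i ≤ M) (n : ℕ) :
    piQ q d = (∑ i ∈ Finset.range n, (d i : ℝ) / q ^ (i + 1))
      + piQ q (fun i => d (i + n)) / q ^ n := by
  have hq0 : 0 < q := lt_trans one_pos hq
  have hs := summ hq hd
  have h := Summable.sum_add_tsum_nat_add (f := fun i => (d i : ℝ) / q ^ (i + 1)) n hs
  rw [piQ, ← h]
  congr 1
  have : ∀ i : ℕ, (d (i + n) : ℝ) / q ^ (i + n + 1)
      = (1 / q ^ n) * ((d (i + n) : ℝ) / q ^ (i + 1)) := by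
    intro i
    rw [one_div, inv_mul_eq_div, div_div, ← pow_add]
    congr 2
    omega
  simp only [this]
  rw [tsum_mul_left, piQ]
  ring

lemma piQ_refl (hq : 1 < q) (hd : ∀ i, d i ≤ M) :
    piQ q (fun i => M - d i) = M / (q - 1) - piQ q d := by
  have h1 : ∀ i : ℕ, ((M - d i : ℕ) : ℝ) / q ^ (i + 1)
      = (M : ℝ) / q ^ (i+1) - (d i : ℝ) / q ^ (i+1) := by
    intro i
    rw [Nat.cast_sub (hd i), sub_div]
  rw [piQ]
  simp only [h1]
  rw [Summable.tsum_sub (summ hq (fun _ => le_refl M)) (summ hq hd), ← piQ, ← piQ, piQ_const_M hq]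

/-- Remainder sequence of the greedy algorithm. -/
noncomputable def grY (M : ℕ) (p : ℝ) (y : ℝ) : ℕ → ℝ
  | 0 => y
  | n+1 => p * grY M p y n - (min M ⌊p * grY M p y n⌋₊ : ℕ)

/-- Greedy digits. -/
noncomputable def grD (M : ℕ) (p y : ℝ) (n : ℕ) : ℕ := min M ⌊p * grY M p y n⌋₊

lemma grY_mem (hp : 1 < p) (hp2 : p ≤ M + 1) (hy0 : 0 ≤ y) (hy1 : y ≤ M / (p - 1)) :
    ∀ n, 0 ≤ grY M p y n ∧ grY M p y n ≤ M / (p - 1) := by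
  intro n
  induction n with
  | zero => exact ⟨hy0, hy1⟩
  | succ n ih =>
    obtain ⟨h0, h1⟩ := ih
    set z := p * grY M p y n with hz
    have hz0 : 0 ≤ z := mul_nonneg (by linarith) h0
    have hp1 : 0 < p - 1 := by linarith
    constructor
    · show 0 ≤ z - _
      have : ((min M ⌊z⌋₊ : ℕ) : ℝ) ≤ ⌊z⌋₊ := by
        exact_mod_cast Nat.cast_le.2 (min_le_right _ _)
      have h2 : ((⌊z⌋₊ : ℕ) : ℝ) ≤ z := Nat.floor_le hz0
      linarith
    · show z - _ ≤ _
      rcases le_or_gt (M : ℕ) ⌊z⌋₊ with h | h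
      · have hmin : min M ⌊z⌋₊ = M := min_eq_left h
        rw [hmin]
        have : z ≤ p * (M / (p-1)) := by
          exact mul_le_mul_of_nonneg_left h1 (by linarith)
        have hpm : p * (M / (p-1)) - M = M / (p - 1) := by
          field_simp
          ring
        linarith
      · have hmin : min M ⌊z⌋₊ = ⌊z⌋₊ := min_eq_right (le_of_lt h)
        rw [hmin]
        have h2 : z < (⌊z⌋₊ : ℝ) + 1 := Nat.lt_floor_add_one z
        have h3 : (1:ℝ) ≤ M / (p - 1) := by
          rw [le_div_iff₀ hp1]
          linarith
        linarith

lemma grY_partial (hp : 1 < p) (hp2 : p ≤ M + 1) (hy0 : 0 ≤ y) (hy1 : y ≤ M / (p - 1)) :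
    ∀ n, ∑ i ∈ Finset.range n, (grD M p y i : ℝ) / p ^ (i + 1)
      = y - grY M p y n / p ^ n := by
  intro n
  have hp0 : (0:ℝ) < p := by linarith
  induction n with
  | zero => simp only [Finset.range_zero, Finset.sum_empty, grY, pow_zero, div_one]; ring
  | succ n ih =>
    rw [Finset.sum_range_succ, ih]
    have hgr : grY M p y (n+1) = p * grY M p y n - (grD M p y n : ℕ) := rfl
    have hpn : (0:ℝ) < p ^ n := pow_pos hp0 n
    have hpn1 : (0:ℝ) < p ^ (n+1) := pow_pos hp0 (n+1)
    rw [hgr]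
    rw [pow_succ]
    field_simp
    ring

lemma greedy_exists (hp : 1 < p) (hp2 : p ≤ M + 1) (hy0 : 0 ≤ y) (hy1 : y ≤ M / (p - 1)) :
    ∃ d : ℕ → ℕ, (∀ i, d i ≤ M) ∧ piQ p d = y := by
  have hp0 : (0:ℝ) < p := by linarith
  refine ⟨grD M p y, fun i => min_le_left _ _, ?_⟩
  have hs : Summable (fun i => ((grD M p y i : ℕ) : ℝ) / p ^ (i + 1)) :=
    summ hp (fun i => min_le_left _ _)
  have h1 : Tendsto (fun n => ∑ i ∈ Finset.range n, ((grD M p y i : ℕ) : ℝ) / p ^ (i + 1))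
      atTop (nhds (piQ p (grD M p y))) := hs.hasSum.tendsto_sum_nat
  have h2 : Tendsto (fun n => ∑ i ∈ Finset.range n, ((grD M p y i : ℕ) : ℝ) / p ^ (i + 1))
      atTop (nhds y) := by
    have heq : ∀ n, ∑ i ∈ Finset.range n, ((grD M p y i : ℕ) : ℝ) / p ^ (i + 1)
        = y - grY M p y n / p ^ n := grY_partial hp hp2 hy0 hy1
    simp only [heq]
    have h3 : Tendsto (fun n => grY M p y n / p ^ n) atTop (nhds 0) := by
      apply squeeze_zero (fun n => div_nonneg (grY_mem hp hp2 hy0 hy1 n).1 (by positivity))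
        (g := fun n => (M / (p-1)) * (1/p)^n)
      · intro n
        have hb := (grY_mem hp hp2 hy0 hy1 n).2
        have hpn : (0:ℝ) < p ^ n := pow_pos hp0 n
        rw [div_le_iff₀ hpn] at *
        have : (1/p:ℝ)^n * p ^ n = 1 := by
          rw [one_div, inv_pow, inv_mul_cancel₀ (ne_of_gt hpn)]
        calc grY M p y n ≤ M / (p-1) := hb
          _ = M / (p-1) * ((1/p)^n * p^n) := by rw [this, mul_one]
          _ = M / (p-1) * (1/p)^n * p^n := by ring
      · have : Tendsto (fun n : ℕ => (1/p : ℝ)^n) atTop (nhds 0) :=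
          tendsto_pow_atTop_nhds_zero_of_lt_one (by positivity) (by
            rw [div_lt_one hp0]; exact hp)
        simpa using this.const_mul (M / (p-1))
    have h4 : Tendsto (fun _ : ℕ => y) atTop (nhds y) := tendsto_const_nhds
    simpa using h4.sub h3
  exact tendsto_nhds_unique h1 h2

/-- Tail value after digit `k` (0-indexed). -/
def rho (q : ℝ) (d : ℕ → ℕ) (k : ℕ) : ℝ := piQ q (fun i => d (i + (k + 1)))

/-- `D`-value of the length-`n` prefix of `v`. -/
def Dw (q : ℝ) (n : ℕ) (v : ℕ → ℕ) : ℝ :=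
  q ^ (n + 1) * (1 - ∑ i ∈ Finset.range n, (v i : ℝ) / q ^ (i + 1))

/-- A strict witness for non-uniqueness. -/
def StrictW (M : ℕ) (q : ℝ) : Prop :=
  ∃ (n : ℕ) (v : ℕ → ℕ) (g g' : ℕ), (∀ i, v i ≤ M) ∧ g < g' ∧ g' ≤ M ∧
    (g' : ℝ) ≤ Dw q n v ∧ Dw q n v < (g : ℝ) + M / (q - 1)

lemma rho_nonneg (hq : 1 < q) (k : ℕ) : 0 ≤ rho q d k := piQ_nonneg hq

lemma rho_le (hq : 1 < q) (hd : ∀ i, d i ≤ M) (k : ℕ) : rho q d k ≤ M / (q - 1) :=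
  piQ_le hq (fun i => hd _)

lemma Dw_eq (hq : 1 < q) (hd : ∀ i, d i ≤ M) (hx : piQ q d = 1) (k : ℕ) :
    Dw q k d = (d k : ℝ) + rho q d k := by
  have hq0 : (0:ℝ) < q := lt_trans one_pos hq
  have hpk : (0:ℝ) < q ^ (k+1) := pow_pos hq0 _
  have hsplit := piQ_split hq hd (k+1)
  rw [hx, Finset.sum_range_succ] at hsplit
  rw [Dw]
  have h2 : (1 : ℝ) - ∑ i ∈ Finset.range k, (d i : ℝ) / q ^ (i + 1)
      = (d k : ℝ) / q ^ (k+1) + rho q d k / q ^ (k+1) := by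
    rw [rho]
    linarith [hsplit]
  rw [h2]
  field_simp

lemma lemA (hq : 1 < q) (hna : ¬ StrictW M q) (hd : ∀ i, d i ≤ M) (hx : piQ q d = 1)
    (k : ℕ) (hk : d k < M) : rho q d k < 1 ∨ rho q d k = M / (q - 1) := by
  by_contra hcon
  push_neg at hcon
  obtain ⟨h1, h2⟩ := hcon
  have h3 : rho q d k < M / (q - 1) := lt_of_le_of_ne (rho_le hq hd k) h2
  apply hna
  refine ⟨k, d, d k, d k + 1, hd, by omega, by omega, ?_, ?_⟩
  · rw [Dw_eq hq hd hx k]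
    push_cast
    linarith
  · rw [Dw_eq hq hd hx k]
    linarith

lemma lemB (hq : 1 < q) (hna : ¬ StrictW M q) (hd : ∀ i, d i ≤ M) (hx : piQ q d = 1)
    (k : ℕ) (hk : 0 < d k) : M / (q - 1) - 1 ≤ rho q d k := by
  by_contra hcon
  push_neg at hcon
  apply hna
  refine ⟨k, d, d k - 1, d k, hd, by omega, hd k, ?_, ?_⟩
  · rw [Dw_eq hq hd hx k]
    linarith [rho_nonneg (d := d) hq k]
  · rw [Dw_eq hq hd hx k]
    have : ((d k - 1 : ℕ) : ℝ) = (d k : ℝ) - 1 := by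
      rw [Nat.cast_sub hk]
      norm_num
    rw [this]
    linarith

lemma two_exp_contra (hq : 1 < q) (hqM : q < (M : ℝ) + 1) (hna : ¬ StrictW M q)
    {c c' : ℕ → ℕ} (hcd : ∀ i, c i ≤ M) (hcx : piQ q c = 1)
    (hcd' : ∀ i, c' i ≤ M) (hcx' : piQ q c' = 1)
    (k : ℕ) (hpre : ∀ i < k, c i = c' i) (hlt : c k < c' k) : False := by
  have hq0 : (0:ℝ) < q := lt_trans one_pos hq
  have hq1 : (0:ℝ) < q - 1 := by linarith
  have hM1 : (1:ℝ) < M / (q - 1) := by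
    rw [lt_div_iff₀ hq1]
    linarith
  -- the two D-values agree
  have hDeq : Dw q k c = Dw q k c' := by
    unfold Dw
    congr 2
    apply Finset.sum_congr rfl
    intro i hi
    rw [hpre i (Finset.mem_range.1 hi)]
  have hDc := Dw_eq hq hcd hcx k
  have hDc' := Dw_eq hq hcd' hcx' k
  have hrho' : 0 ≤ rho q c' k := rho_nonneg hq k
  have hck : (c k : ℝ) + 1 ≤ (c' k : ℝ) := by exact_mod_cast hlt
  have hr1 : 1 ≤ rho q c k := by
    have : (c k : ℝ) + rho q c k = (c' k : ℝ) + rho q c' k := by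
      rw [← hDc, ← hDc', hDeq]
    linarith
  have hrc : rho q c k = M / (q - 1) := by
    rcases lemA hq hna hcd hcx k (lt_of_lt_of_le hlt (hcd' k)) with h | h
    · linarith
    · exact h
  have hck1 : c' k = c k + 1 := by
    have hB := lemB hq hna hcd' hcx' k (lt_of_le_of_lt (Nat.zero_le _) hlt)
    have hrr : rho q c' k = rho q c k - ((c' k : ℝ) - c k) := by
      have : (c k : ℝ) + rho q c k = (c' k : ℝ) + rho q c' k := by
        rw [← hDc, ← hDc', hDeq]
      linarith
    rw [hrr, hrc] at hB
    have : (c' k : ℝ) ≤ (c k : ℝ) + 1 := by linarith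
    have := Nat.cast_le (α := ℝ) |>.1 (by push_cast; linarith : ((c' k : ℕ) : ℝ) ≤ ((c k + 1 : ℕ) : ℝ))
    omega
  -- the auxiliary expansion e'
  set e' : ℕ → ℕ := fun i => if i < k then c i else if i = k then c k + 1 else M - c (i - (k+1)) with he'
  have hck2 : c k + 1 ≤ M := by
    have := hcd' k
    omega
  have he'd : ∀ i, e' i ≤ M := by
    intro i
    simp only [he']
    split
    · exact hcd i
    · split
      · exact hck2
      · exact Nat.sub_le _ _
  have htail : (fun i => e' (i + (k+1))) = fun i => M - c i := by
    funext i
    simp only [he']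
    have h1 : ¬ (i + (k+1) < k) := by omega
    have h2 : ¬ (i + (k+1) = k) := by omega
    have h3 : i + (k+1) - (k+1) = i := by omega
    rw [if_neg h1, if_neg h2, h3]
  have hrefl : piQ q (fun i => M - c i) = M / (q - 1) - 1 := by
    rw [piQ_refl hq hcd, hcx]
  have he'x : piQ q e' = 1 := by
    have hsplit := piQ_split hq he'd (k+1)
    rw [htail, hrefl] at hsplit
    have hcsplit := piQ_split hq hcd (k+1)
    rw [hcx, Finset.sum_range_succ] at hcsplit
    rw [Finset.sum_range_succ] at hsplit
    have hpre' : ∀ i ∈ Finset.range k, (e' i : ℝ) / q ^ (i+1) = (c i : ℝ) / q ^ (i+1) := by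
      intro i hi
      have : e' i = c i := by
        simp only [he']
        rw [if_pos (Finset.mem_range.1 hi)]
      rw [this]
    rw [Finset.sum_congr rfl hpre'] at hsplit
    have he'k : e' k = c k + 1 := by
      simp [he']
    rw [he'k] at hsplit
    have hrhoc : rho q c k = M / (q-1) := hrc
    rw [rho] at hrhoc
    have hcast : ((c k + 1 : ℕ) : ℝ) / q ^ (k+1) = (c k : ℝ) / q ^ (k+1) + 1 / q ^ (k+1) := by
      push_cast
      ring
    rw [hcast] at hsplit
    have hsub : (M / (q-1) - 1) / q ^ (k+1) = (M / (q-1)) / q ^ (k+1) - 1 / q ^ (k+1) := by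
      ring
    rw [hsub] at hsplit
    have : (fun i => c (i + (k+1))) = fun i => c (i + (k+1)) := rfl
    rw [hsplit]
    rw [← hrhoc]
    linarith [hcsplit]
  -- apply lemma B at position 2k+1
  have hpos : 0 < e' (2*k+1) := by
    simp only [he']
    have h1 : ¬ (2*k+1 < k) := by omega
    have h2 : ¬ (2*k+1 = k) := by omega
    rw [if_neg h1, if_neg h2]
    have : 2*k+1 - (k+1) = k := by omega
    rw [this]
    have := hcd' k
    omega
  have hrho0 : rho q e' (2*k+1) = 0 := by
    rw [rho]
    have : (fun i => e' (i + (2*k+1+1))) = fun i => M - c (i + (k+1)) := by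
      funext i
      simp only [he']
      have h1 : ¬ (i + (2*k+1+1) < k) := by omega
      have h2 : ¬ (i + (2*k+1+1) = k) := by omega
      have h3 : i + (2*k+1+1) - (k+1) = i + (k+1) := by omega
      rw [if_neg h1, if_neg h2, h3]
    rw [this]
    have h3 : piQ q (fun i => M - c (i + (k+1))) = M / (q-1) - rho q c k := by
      have := piQ_refl hq (d := fun i => c (i + (k+1))) (fun i => hcd _)
      rw [← rho] at this
      exact this
    rw [h3, hrc]
    ring
  have hB := lemB hq hna he'd he'x (2*k+1) hpos
  rw [hrho0] at hB
  linarith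

lemma two_of_StrictW (hp : 1 < p) (hpM : p ≤ (M:ℝ) + 1) (hW : StrictW M p) :
    ∃ e₁ e₂ : ℕ → ℕ, e₁ ≠ e₂ ∧ IsExpansion M p 1 e₁ ∧ IsExpansion M p 1 e₂ := by
  obtain ⟨n, v, g, g', hv, hgg, hg'M, hlow, hupp⟩ := hW
  have hp0 : (0:ℝ) < p := lt_trans one_pos hp
  have hp1 : (0:ℝ) < p - 1 := by linarith
  have hpn : (0:ℝ) < p ^ (n+1) := pow_pos hp0 _
  set D := Dw p n v with hD
  have hgg' : (g:ℝ) < (g':ℝ) := by exact_mod_cast hgg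
  have hr1a : (0:ℝ) ≤ D - g := by linarith
  have hr1b : D - g ≤ M / (p-1) := by linarith
  have hr2a : (0:ℝ) ≤ D - g' := by linarith
  have hr2b : D - g' ≤ M / (p-1) := by linarith
  obtain ⟨G₁, hG₁d, hG₁x⟩ := greedy_exists hp hpM hr1a hr1b
  obtain ⟨G₂, hG₂d, hG₂x⟩ := greedy_exists hp hpM hr2a hr2b
  set e₁ : ℕ → ℕ := fun i => if i < n then v i else if i = n then g else G₁ (i - (n+1)) with he₁
  set e₂ : ℕ → ℕ := fun i => if i < n then v i else if i = n then g' else G₂ (i - (n+1)) with he₂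
  have he₁d : ∀ i, e₁ i ≤ M := by
    intro i
    simp only [he₁]
    split
    · exact hv i
    · split
      · omega
      · exact hG₁d _
  have he₂d : ∀ i, e₂ i ≤ M := by
    intro i
    simp only [he₂]
    split
    · exact hv i
    · split
      · exact hg'M
      · exact hG₂d _
  have key : ∀ (e : ℕ → ℕ) (h : ℕ) (G : ℕ → ℕ), (∀ i, e i ≤ M) →
      (∀ i, e i = if i < n then v i else if i = n then h else G (i - (n+1))) →
      piQ p G = D - h → piQ p e = 1 := by
    intro e h G hed hef hGx
    have hsplit := piQ_split hp hed (n+1)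
    have htail : (fun i => e (i + (n+1))) = G := by
      funext i
      rw [hef]
      have h1 : ¬ (i + (n+1) < n) := by omega
      have h2 : ¬ (i + (n+1) = n) := by omega
      have h3 : i + (n+1) - (n+1) = i := by omega
      rw [if_neg h1, if_neg h2, h3]
    rw [htail, hGx] at hsplit
    rw [Finset.sum_range_succ] at hsplit
    have hpre : ∀ i ∈ Finset.range n, (e i : ℝ) / p ^ (i+1) = (v i : ℝ) / p ^ (i+1) := by
      intro i hi
      rw [hef i, if_pos (Finset.mem_range.1 hi)]
    rw [Finset.sum_congr rfl hpre] at hsplit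
    have hen : e n = h := by
      rw [hef n, if_neg (lt_irrefl n), if_pos rfl]
    rw [hen] at hsplit
    have hDdiv : D / p ^ (n+1) = 1 - ∑ i ∈ Finset.range n, (v i : ℝ) / p ^ (i+1) := by
      rw [hD, Dw]
      field_simp
    have harith : (h : ℝ) / p ^ (n+1) + (D - h) / p ^ (n+1) = D / p ^ (n+1) := by ring
    rw [hsplit]
    linarith [harith, hDdiv]
  have he₁x : piQ p e₁ = 1 := key e₁ g G₁ he₁d (fun i => rfl) hG₁x
  have he₂x : piQ p e₂ = 1 := key e₂ g' G₂ he₂d (fun i => rfl) hG₂x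
  refine ⟨e₁, e₂, ?_, ⟨he₁d, he₁x⟩, ⟨he₂d, he₂x⟩⟩
  intro hcon
  have h1 : e₁ n = g := by simp [he₁]
  have h2 : e₂ n = g' := by simp [he₂]
  rw [hcon] at h1
  omega

lemma not_univ_of_two (he : ∃ e₁ e₂ : ℕ → ℕ, e₁ ≠ e₂ ∧ IsExpansion M p 1 e₁ ∧ IsExpansion M p 1 e₂) :
    p ∉ UnivBases M := by
  rintro ⟨-, -, d, -, hu⟩
  obtain ⟨e₁, e₂, hne, h₁, h₂⟩ := he
  exact hne ((hu e₁ h₁).trans (hu e₂ h₂).symm)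

lemma univ_top (hM : 0 < M) : ((M:ℝ) + 1) ∈ UnivBases M := by
  have hM1 : (1:ℝ) ≤ M := by exact_mod_cast hM
  have hq : (1:ℝ) < (M:ℝ) + 1 := by linarith
  have hq1 : (M:ℝ) + 1 - 1 = M := by ring
  have hMne : (M:ℝ) ≠ 0 := by positivity
  refine ⟨hq, le_refl _, fun _ => M, ⟨fun i => le_refl M, ?_⟩, ?_⟩
  · rw [show (fun _ : ℕ => M) = (fun _ : ℕ => M) from rfl]
    have := piQ_const_M (M := M) (q := (M:ℝ)+1) hq
    rw [this, hq1, div_self hMne]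
  · rintro d ⟨hd, hx⟩
    have hrefl : piQ ((M:ℝ)+1) (fun i => M - d i) = M / ((M:ℝ)+1-1) - 1 := by
      rw [piQ_refl hq hd, hx]
    rw [hq1, div_self hMne, sub_self] at hrefl
    have hs : Summable (fun i => ((M - d i : ℕ) : ℝ) / ((M:ℝ)+1) ^ (i + 1)) :=
      summ hq (fun i => Nat.sub_le _ _)
    have hzero : ∀ i, ((M - d i : ℕ) : ℝ) / ((M:ℝ)+1) ^ (i + 1) = 0 := by
      intro i
      have hle := Summable.le_tsum hs i (fun j _ => by positivity)
      rw [← piQ, hrefl] at hle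
      have hge : (0:ℝ) ≤ ((M - d i : ℕ) : ℝ) / ((M:ℝ)+1) ^ (i + 1) := by positivity
      linarith
    funext i
    have := hzero i
    have hpow : (0:ℝ) < ((M:ℝ)+1) ^ (i+1) := by positivity
    rw [div_eq_zero_iff] at this
    rcases this with h | h
    · have : M - d i = 0 := by exact_mod_cast h
      have := hd i
      omega
    · exact absurd h (ne_of_gt hpow)

lemma StrictW_of_not_univ (hq : 1 < q) (hqM : q < (M:ℝ) + 1) (hM : 0 < M)
    (hU : q ∉ UnivBases M) : StrictW M q := by
  by_contra hna
  have hq1 : (0:ℝ) < q - 1 := by linarith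
  have h1M : (1:ℝ) ≤ M / (q - 1) := by
    rw [le_div_iff₀ hq1]
    linarith
  obtain ⟨d₀, hd₀, hx₀⟩ := greedy_exists hq (le_of_lt hqM) zero_le_one h1M
  apply hU
  refine ⟨hq, le_of_lt hqM, d₀, ⟨hd₀, hx₀⟩, ?_⟩
  rintro d ⟨hd, hx⟩
  by_contra hne
  have hex : ∃ k, d k ≠ d₀ k := by
    by_contra hall
    push_neg at hall
    exact hne (funext hall)
  have hkne : d (Nat.find hex) ≠ d₀ (Nat.find hex) := Nat.find_spec hex
  have hpre : ∀ i < Nat.find hex, d i = d₀ i := fun i hi => not_not.1 (Nat.find_min hex hi)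
  rcases lt_or_gt_of_ne hkne with h | h
  · exact two_exp_contra hq hqM hna hd hx hd₀ hx₀ (Nat.find hex) hpre h
  · exact two_exp_contra hq hqM hna hd₀ hx₀ hd hx (Nat.find hex)
      (fun i hi => (hpre i hi).symm) h

lemma part2 (hM : 0 < M) (hq1 : 1 < q) (hqM : q ≤ (M:ℝ) + 1) (hU : q ∉ UnivBases M) :
    ∃ r ∈ Set.Ioc q ((M:ℝ) + 1), UnivBases M ∩ Set.Ioo q r = ∅ := by
  rcases eq_or_lt_of_le hqM with heq | hlt
  · exact absurd (heq ▸ univ_top hM) hU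
  have hq0 : (0:ℝ) < q := lt_trans one_pos hq1
  obtain ⟨n, v, g, g', hv, hgg, hg'M, hlow, hupp⟩ := StrictW_of_not_univ hq1 hlt hM hU
  have hg'1 : (1:ℝ) ≤ (g' : ℝ) := by exact_mod_cast Nat.one_le_iff_ne_zero.2 (by omega)
  set F : ℝ → ℝ := fun p =>
    (g:ℝ) + M/(p-1) - p ^ (n+1) * (1 - ∑ i ∈ Finset.range n, (v i : ℝ) / p ^ (i+1)) with hF
  have hcont : ContinuousAt F q := by
    apply ContinuousAt.sub
    · exact continuousAt_const.add (continuousAt_const.div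
        (continuousAt_id.sub continuousAt_const) (by intro h; rw [sub_eq_zero] at h; rw [← h] at hq1; exact lt_irrefl _ hq1))
    · apply ContinuousAt.mul (continuousAt_pow _ _)
      apply ContinuousAt.sub continuousAt_const
      apply tendsto_finset_sum
      intro i _
      exact continuousAt_const.div (continuousAt_pow _ _) (by positivity)
  have hFq : 0 < F q := by
    have : F q = (g:ℝ) + M/(q-1) - Dw q n v := by rw [hF, Dw]
    rw [this]
    linarith
  have hev := hcont.eventually (eventually_gt_nhds hFq)
  rw [Metric.eventually_nhds_iff] at hev
  obtain ⟨ε, hε, hball⟩ := hev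
  refine ⟨min (q + ε/2) ((M:ℝ)+1), ⟨lt_min (by linarith) hlt, min_le_right _ _⟩, ?_⟩
  rw [Set.eq_empty_iff_forall_notMem]
  rintro p ⟨hpU, hpq, hpr⟩
  have hp1 : 1 < p := lt_trans hq1 hpq
  have hp0 : (0:ℝ) < p := lt_trans one_pos hp1
  have hpM : p ≤ (M:ℝ) + 1 := le_of_lt (lt_of_lt_of_le hpr (min_le_right _ _))
  have hdist : dist p q < ε := by
    rw [Real.dist_eq, abs_of_pos (by linarith : (0:ℝ) < p - q)]
    have := lt_of_lt_of_le hpr (min_le_left _ _)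
    linarith
  have hFp : 0 < F p := hball hdist
  -- lower bound transfers
  rw [Dw] at hlow
  have hsum : ∑ i ∈ Finset.range n, (v i : ℝ) / p ^ (i+1)
      ≤ ∑ i ∈ Finset.range n, (v i : ℝ) / q ^ (i+1) := by
    apply Finset.sum_le_sum
    intro i _
    have hqp : q ^ (i+1) ≤ p ^ (i+1) := pow_le_pow_left₀ (le_of_lt hq0) (le_of_lt hpq) _
    have hqpos : (0:ℝ) < q ^ (i+1) := pow_pos hq0 _
    exact div_le_div_of_nonneg_left (Nat.cast_nonneg _) hqpos hqp
  have hA : 0 < 1 - ∑ i ∈ Finset.range n, (v i : ℝ) / q ^ (i+1) := by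
    by_contra hcon
    push_neg at hcon
    have h1 := mul_nonpos_of_nonneg_of_nonpos (le_of_lt (pow_pos hq0 (n+1))) hcon
    linarith
  have hlow' : (g' : ℝ) ≤ Dw p n v := by
    rw [Dw]
    have hstep2 : q ^ (n+1) * (1 - ∑ i ∈ Finset.range n, (v i : ℝ) / q ^ (i+1))
        ≤ p ^ (n+1) * (1 - ∑ i ∈ Finset.range n, (v i : ℝ) / q ^ (i+1)) :=
      mul_le_mul_of_nonneg_right (pow_le_pow_left₀ (le_of_lt hq0) (le_of_lt hpq) _) (le_of_lt hA)
    have hstep1 : p ^ (n+1) * (1 - ∑ i ∈ Finset.range n, (v i : ℝ) / q ^ (i+1))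
        ≤ p ^ (n+1) * (1 - ∑ i ∈ Finset.range n, (v i : ℝ) / p ^ (i+1)) :=
      mul_le_mul_of_nonneg_left (by linarith) (le_of_lt (pow_pos hp0 _))
    linarith
  have hupp' : Dw p n v < (g : ℝ) + M/(p-1) := by
    rw [Dw]
    simp only [hF] at hFp
    linarith
  exact not_univ_of_two
    (two_of_StrictW hp1 hpM ⟨n, v, g, g', hv, hgg, hg'M, hlow', hupp'⟩) hpU

end S3aux

/-- If `dim_H (U ∩ (q, r)) > 0` for every `r ∈ (q, M+1]`, then `q ∈ U`;
moreover (the stronger contrapositive) if `q ∉ U` then `U ∩ (q, r) = ∅` for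
some `r ∈ (q, M+1]`. -/
theorem stmt3 (M : ℕ) (hM : 0 < M) (q : ℝ) (hq : q ∈ Ioc 1 ((M : ℝ) + 1)) :
    ((∀ r ∈ Ioc q ((M : ℝ) + 1), 0 < dimH (UnivBases M ∩ Ioo q r)) →
      q ∈ UnivBases M) ∧
    (q ∉ UnivBases M →
      ∃ r ∈ Ioc q ((M : ℝ) + 1), UnivBases M ∩ Ioo q r = ∅) := by
  obtain ⟨hq1, hqM⟩ := hq
  constructor
  · intro h
    by_contra hU
    obtain ⟨r, hr, hem⟩ := S3aux.part2 hM hq1 hqM hU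
    have h2 := h r hr
    rw [hem, dimH_empty] at h2
    exact lt_irrefl 0 h2
  · intro hU
    exact S3aux.part2 hM hq1 hqM hU

end
end

section
/- Let M be a positive integer and q ∈ (1, M+1]. If for every p ∈ (1, q) the Hausdorff dimension of U ∩ (p, q) is strictly positive, then q belongs to the closure of U, q ≠ q', and q is not the right endpoint q_0^* of any connected component of (1, M+1) \ closure(U). In fact, the paper proves the contrapositive in the stronger form: if q ∈ (1, q'] or q ∈ (q_0, q_0^*] for some connected component (q_0, q_0^*), then U ∩ (p, q) = ∅ for p ∈ (1, q) sufficiently close to q. -/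
open Set MeasureTheory Filter

noncomputable section

/-- If `dim_H (U ∩ (p, q)) > 0` for every `p ∈ (1, q)`, then `q ∈ closure U`,
`q ≠ q'` and `q` is not the right endpoint of any connected component of
`(q', M+1) \ closure U`; moreover (the stronger contrapositive) if
`q ∈ (1, q']` or `q ∈ (q₀, q₀^*]` for some component, then `U ∩ (p, q) = ∅`
for `p ∈ (1, q)` sufficiently close to `q`. -/
theorem stmt7 (M : ℕ) (hM : 0 < M) (q : ℝ) (hq : q ∈ Ioc 1 ((M : ℝ) + 1)) :
    ((∀ p ∈ Ioo (1 : ℝ) q, 0 < dimH (UnivBases M ∩ Ioo p q)) →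
      q ∈ closure (UnivBases M) ∧ q ≠ KL M ∧ ¬∃ a : ℝ, CC M a q) ∧
    ((q ∈ Ioc (1 : ℝ) (KL M) ∨ ∃ a b : ℝ, CC M a b ∧ q ∈ Ioc a b) →
      ∃ p ∈ Ioo (1 : ℝ) q, UnivBases M ∩ Ioo p q = ∅) := by
  obtain ⟨hq1, hqM⟩ := hq
  have hbdd : BddBelow (UnivBases M) := ⟨1, fun x hx => hx.1.le⟩
  have key : (q ∈ Ioc (1 : ℝ) (KL M) ∨ ∃ a b : ℝ, CC M a b ∧ q ∈ Ioc a b) →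
      ∃ p ∈ Ioo (1 : ℝ) q, UnivBases M ∩ Ioo p q = ∅ := by
    rintro (⟨_, hqKL⟩ | ⟨a, b, hcc, haq, hqb⟩)
    · refine ⟨(1 + q) / 2, ⟨by linarith, by linarith⟩, ?_⟩
      ext x
      simp only [mem_inter_iff, mem_Ioo, mem_empty_iff_false, iff_false, not_and]
      intro hxU _ hxq
      have hx : KL M ≤ x := csInf_le hbdd hxU
      linarith
    · refine ⟨max a ((1 + q) / 2), ⟨lt_of_lt_of_le (by linarith) (le_max_right _ _),
        max_lt haq (by linarith)⟩, ?_⟩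
      ext x
      simp only [mem_inter_iff, mem_Ioo, mem_empty_iff_false, iff_false, not_and]
      intro hxU hpx hxq
      have hxab : x ∈ Ioo a b := ⟨lt_of_le_of_lt (le_max_left _ _) hpx, lt_of_lt_of_le hxq hqb⟩
      exact (hcc.2.1 hxab).2 (subset_closure hxU)
  refine ⟨?_, key⟩
  intro H
  have hne : ∀ p ∈ Ioo (1 : ℝ) q, (UnivBases M ∩ Ioo p q).Nonempty := by
    intro p hp
    by_contra h
    rw [not_nonempty_iff_eq_empty] at h
    have := H p hp
    rw [h, dimH_empty] at this
    exact lt_irrefl _ this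
  refine ⟨?_, ?_, ?_⟩
  · rw [Metric.mem_closure_iff]
    intro ε hε
    have hp1 : 1 < max ((1 + q) / 2) (q - ε) :=
      lt_of_lt_of_le (by linarith) (le_max_left _ _)
    have hpq : max ((1 + q) / 2) (q - ε) < q := max_lt (by linarith) (by linarith)
    obtain ⟨x, hxU, hx1, hx2⟩ := hne _ ⟨hp1, hpq⟩
    refine ⟨x, hxU, ?_⟩
    rw [Real.dist_eq, abs_of_pos (by linarith)]
    have : q - ε ≤ max ((1 + q) / 2) (q - ε) := le_max_right _ _
    linarith
  · intro heq
    obtain ⟨p, hp, hempty⟩ := key (Or.inl ⟨hq1, heq.le⟩)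
    obtain ⟨x, hx⟩ := hne p hp
    rw [hempty] at hx
    exact hx
  · rintro ⟨a, hcc⟩
    obtain ⟨p, hp, hempty⟩ := key (Or.inr ⟨a, q, hcc, hcc.1, le_refl q⟩)
    obtain ⟨x, hx⟩ := hne p hp
    rw [hempty] at hx
    exact hx

end
end

section
/- Let M be a positive integer and q ∈ (1, M+1]. If q ∈ U, i.e., 1 has a unique q-expansion, then the number x = 1/q has exactly two distinct q-expansions. Consequently U ⊆ B_2. -/
open Set MeasureTheory Filter

noncomputable section

lemma summable_expansion (M : ℕ) (q : ℝ) (hq : 1 < q) (e : ℕ → ℕ) (he : ∀ i, e i ≤ M) :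
    Summable (fun i => (e i : ℝ) / q ^ (i + 1)) := by
  have hq0 : 0 < q := lt_trans one_pos hq
  have hgeo : Summable (fun i : ℕ => ((M : ℝ) / q) * (1 / q) ^ i) :=
    (summable_geometric_of_lt_one (by positivity)
      (by rw [div_lt_one hq0]; exact hq)).mul_left _
  refine Summable.of_nonneg_of_le (fun i => by positivity) (fun i => ?_) hgeo
  have h1 : ((M : ℝ) / q) * (1 / q) ^ i = (M : ℝ) / q ^ (i + 1) := by
    rw [pow_succ', div_pow, one_pow, div_mul_div_comm, mul_one]
  rw [h1]
  apply div_le_div_of_nonneg_right _ (by positivity)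
  exact_mod_cast he i

lemma piQ_shift (M : ℕ) (q : ℝ) (hq : 1 < q) (e : ℕ → ℕ) (he : ∀ i, e i ≤ M) :
    piQ q e = (e 0 : ℝ) / q + piQ q (fun i => e (i + 1)) / q := by
  have hs := summable_expansion M q hq e he
  rw [piQ, Summable.tsum_eq_zero_add hs]
  congr 1
  · norm_num
  rw [piQ, ← tsum_div_const]
  congr 1 with i
  rw [pow_succ (n := i + 1)]
  ring

lemma expansion_zero (M : ℕ) (q : ℝ) (hq : 1 < q) (e : ℕ → ℕ) (he : ∀ i, e i ≤ M)
    (h : piQ q e = 0) : ∀ i, e i = 0 := by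
  have hs := summable_expansion M q hq e he
  have hq0 : 0 < q := lt_trans one_pos hq
  intro i
  have hle : (e i : ℝ) / q ^ (i + 1) ≤ 0 := by
    have := Summable.le_tsum hs i (fun j _ => by positivity)
    rw [piQ] at h; linarith [this, h]
  have hge : (0 : ℝ) ≤ (e i : ℝ) / q ^ (i + 1) := by positivity
  have : (e i : ℝ) / q ^ (i + 1) = 0 := le_antisymm hle hge
  have : (e i : ℝ) = 0 := by
    field_simp at this
    simpa using this
  exact_mod_cast this

lemma key_two_expansions (M : ℕ) (hM : 0 < M) (q : ℝ) (hqU : q ∈ UnivBases M) :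
    HasExactlyTwoExpansions M q (1 / q) := by
  obtain ⟨hq1, hqM, d, hd, hduniq⟩ := hqU
  have hq0 : 0 < q := lt_trans one_pos hq1
  have hqne : q ≠ 0 := ne_of_gt hq0
  set c : ℕ → ℕ := fun i => if i = 0 then 1 else 0 with hc
  set e : ℕ → ℕ := fun i => if i = 0 then 0 else d (i - 1) with he
  have hcM : ∀ i, c i ≤ M := by
    intro i; simp only [hc]; split <;> omega
  have heM : ∀ i, e i ≤ M := by
    intro i; simp only [he]; split
    · omega
    · exact hd.1 _
  have hesucc : (fun i => e (i + 1)) = d := by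
    funext i; simp [he]
  have hpic : piQ q c = 1 / q := by
    rw [piQ, tsum_eq_single 0]
    · simp [hc]
    · intro b hb; simp [hc, hb]
  have hpie : piQ q e = 1 / q := by
    rw [piQ_shift M q hq1 e heM, hesucc, hd.2]
    simp [he]
  refine ⟨c, e, ?_, ⟨hcM, hpic⟩, ⟨heM, hpie⟩, ?_⟩
  · intro h
    have : c 0 = e 0 := by rw [h]
    simp [hc, he] at this
  · intro f hf
    have hfs := piQ_shift M q hq1 f hf.1
    rw [hf.2] at hfs
    rcases Nat.eq_zero_or_pos (f 0) with hf0 | hf0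
    · -- f = e
      right
      have htail : piQ q (fun i => f (i + 1)) = 1 := by
        rw [hf0] at hfs
        simp at hfs
        field_simp at hfs
        linarith
      have := hduniq (fun i => f (i + 1)) ⟨fun i => hf.1 (i + 1), htail⟩
      funext i
      cases i with
      | zero => simp [he, hf0]
      | succ n =>
        have : f (n + 1) = d n := congrFun this n
        simp [he, this]
    · -- f = c
      left
      have hle : (f 0 : ℝ) / q ≤ 1 / q := by
        have h2 : (f 0 : ℝ) / q ^ (0 + 1) ≤ piQ q f :=
          Summable.le_tsum (summable_expansion M q hq1 f hf.1) 0 (fun j _ => by positivity)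
        rw [hf.2] at h2
        simpa using h2
      have hf01 : f 0 = 1 := by
        have : (f 0 : ℝ) ≤ 1 := by
          rwa [div_le_div_iff_of_pos_right hq0] at hle
        have : f 0 ≤ 1 := by exact_mod_cast this
        omega
      have htail0 : piQ q (fun i => f (i + 1)) = 0 := by
        rw [hf01] at hfs
        have : piQ q (fun i => f (i + 1)) / q = 0 := by push_cast at hfs; linarith
        field_simp at this
        simpa using this
      have hzero := expansion_zero M q hq1 _ (fun i => hf.1 (i + 1)) htail0
      funext i
      cases i with
      | zero => simp [hc, hf01]
      | succ n => simp [hc, hzero n]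

/-- If `q ∈ U`, then `1/q` has exactly two distinct `q`-expansions;
consequently `U ⊆ B₂`. -/
theorem stmt10 (M : ℕ) (hM : 0 < M) (q : ℝ) (hq : q ∈ Ioc 1 ((M : ℝ) + 1))
    (hqU : q ∈ UnivBases M) :
    HasExactlyTwoExpansions M q (1 / q) ∧ UnivBases M ⊆ B2 M := by
  constructor
  · exact key_two_expansions M hM q hqU
  · intro p hp
    have hp1 := hp.1
    have hpM := hp.2.1
    have hp0 : 0 < p := lt_trans one_pos hp1
    refine ⟨hp1, hpM, 1 / p, ⟨by positivity, ?_⟩, key_two_expansions M hM p hp⟩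
    have h1 : 1 / p ≤ 1 := by
      rw [div_le_one hp0]; linarith
    have h2 : (1 : ℝ) ≤ (M : ℝ) / (p - 1) := by
      rw [le_div_iff₀ (by linarith)]
      linarith
    linarith

end
end

section
/- Let M be a positive integer, q ∈ U with q ≠ M+1, and r ∈ (q, M+1). Then dim_H(U ∩ (q, r)) ≥ dim_H π_{M+1}({α(p) : p ∈ U ∩ (q, r)}). -/
open Set MeasureTheory Filter

noncomputable section

-- Auxiliary lemmas
lemma summable_piQ {M : ℕ} {ρ : ℝ} (hρ : 1 < ρ) {d : ℕ → ℕ} (hd : ∀ i, d i ≤ M) :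
    Summable (fun i : ℕ => (d i : ℝ) / ρ ^ (i + 1)) := by
  have h0 : (0:ℝ) < ρ := lt_trans one_pos hρ
  have hlt : 1/ρ < 1 := by rw [div_lt_one h0]; exact hρ
  have hge : (0:ℝ) ≤ 1/ρ := by positivity
  have hs : Summable (fun i : ℕ => ((M:ℝ)/ρ) * (1/ρ)^i) :=
    (summable_geometric_of_lt_one hge hlt).mul_left _
  refine Summable.of_nonneg_of_le (fun i => by positivity) (fun i => ?_) hs
  have : ((M:ℝ)/ρ) * (1/ρ)^i = (M:ℝ)/ρ^(i+1) := by
    rw [one_div, inv_pow, pow_succ]; field_simp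
  rw [this]
  gcongr <;> first | positivity | exact_mod_cast hd i

lemma piQ_nonneg {ρ : ℝ} (hρ : 0 < ρ) (d : ℕ → ℕ) : 0 ≤ piQ ρ d :=
  tsum_nonneg (fun i => by positivity)

lemma tsum_const_div_pow {ρ : ℝ} (hρ : 1 < ρ) (c : ℝ) :
    ∑' i : ℕ, c / ρ ^ (i + 1) = c / (ρ - 1) := by
  have h0 : (0:ℝ) < ρ := lt_trans one_pos hρ
  have hlt : 1/ρ < 1 := by rw [div_lt_one h0]; exact hρ
  have hge : (0:ℝ) ≤ 1/ρ := by positivity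
  have h1 : ∀ i : ℕ, c / ρ ^ (i + 1) = (c/ρ) * (1/ρ)^i := by
    intro i; rw [one_div, inv_pow, pow_succ]; field_simp
  rw [tsum_congr h1, tsum_mul_left, tsum_geometric_of_lt_one hge hlt]
  rw [one_div]
  rw [show (1 - ρ⁻¹)⁻¹ = ρ/(ρ-1) by rw [inv_eq_iff_eq_inv]; field_simp]
  field_simp

lemma piQ_le {M : ℕ} {ρ : ℝ} (hρ : 1 < ρ) {d : ℕ → ℕ} (hd : ∀ i, d i ≤ M) :
    piQ ρ d ≤ M / (ρ - 1) := by
  have h := tsum_const_div_pow hρ (M:ℝ)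
  rw [piQ, ← h]
  refine Summable.tsum_le_tsum (fun i => ?_) (summable_piQ hρ hd) ?_
  · gcongr <;> first | positivity | exact_mod_cast hd i
  · have : Summable (fun i : ℕ => ((fun _ => M) i : ℝ) / ρ ^ (i + 1)) :=
      summable_piQ hρ (fun _ => le_refl M)
    exact this

/-- shift of a sequence -/
def shiftSeq (d : ℕ → ℕ) (k : ℕ) : ℕ → ℕ := fun i => d (i + k)

lemma piQ_shift_s15 {M : ℕ} {ρ : ℝ} (hρ : 1 < ρ) {d : ℕ → ℕ} (hd : ∀ i, d i ≤ M) (k : ℕ) :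
    piQ ρ d = (∑ i ∈ Finset.range k, (d i : ℝ) / ρ ^ (i + 1)) + (1/ρ^k) * piQ ρ (shiftSeq d k) := by
  have h0 : (0:ℝ) < ρ := lt_trans one_pos hρ
  have hs := summable_piQ (M := M) hρ hd
  have h1 := Summable.sum_add_tsum_nat_add k hs
  rw [piQ, ← h1]
  congr 1
  rw [piQ, ← tsum_mul_left]
  refine tsum_congr (fun i => ?_)
  rw [shiftSeq]
  rw [show i + k + 1 = (i+1) + k by ring, pow_add]
  field_simp

/-- Greedy remainder sequence. -/
def gRem (M : ℕ) (ρ x : ℝ) : ℕ → ℝ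
  | 0 => x
  | n+1 => ρ * gRem M ρ x n - ↑(min M ⌊ρ * gRem M ρ x n⌋₊)

/-- Greedy digits. -/
def gDig (M : ℕ) (ρ x : ℝ) (n : ℕ) : ℕ := min M ⌊ρ * gRem M ρ x n⌋₊

lemma gDig_le (M : ℕ) (ρ x : ℝ) (n : ℕ) : gDig M ρ x n ≤ M := min_le_left _ _

lemma gRem_invariant {M : ℕ} {ρ x : ℝ} (hρ : 1 < ρ) (hρ2 : ρ ≤ M + 1)
    (hx0 : 0 ≤ x) (hx1 : x ≤ M / (ρ - 1)) :
    ∀ n, 0 ≤ gRem M ρ x n ∧ gRem M ρ x n ≤ M / (ρ - 1) := by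
  have h0 : (0:ℝ) < ρ := lt_trans one_pos hρ
  have hM1 : (1:ℝ) ≤ M / (ρ - 1) := by
    rw [le_div_iff₀ (by linarith)]; linarith
  intro n
  induction n with
  | zero => exact ⟨hx0, hx1⟩
  | succ n ih =>
    obtain ⟨h1, h2⟩ := ih
    have hr0 : 0 ≤ ρ * gRem M ρ x n := by positivity
    by_cases hc : ⌊ρ * gRem M ρ x n⌋₊ ≤ M
    · have hmin : min M ⌊ρ * gRem M ρ x n⌋₊ = ⌊ρ * gRem M ρ x n⌋₊ := min_eq_right hc
      constructor
      · simp only [gRem, hmin]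
        have := Nat.floor_le hr0
        linarith
      · simp only [gRem, hmin]
        have := Nat.lt_floor_add_one (ρ * gRem M ρ x n)
        have h3 : ρ * gRem M ρ x n - ⌊ρ * gRem M ρ x n⌋₊ < 1 := by linarith
        linarith
    · push_neg at hc
      have hmin : min M ⌊ρ * gRem M ρ x n⌋₊ = M := min_eq_left (le_of_lt hc)
      have hMle : (M:ℝ) + 1 ≤ ρ * gRem M ρ x n := by
        have : (M+1 : ℕ) ≤ ⌊ρ * gRem M ρ x n⌋₊ := hc
        have := (Nat.le_floor_iff hr0).mp this
        push_cast at this ⊢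
        linarith
      constructor
      · simp only [gRem, hmin]; linarith
      · simp only [gRem, hmin]
        push_cast
        nlinarith [h2, (le_div_iff₀ (by linarith : (0:ℝ) < ρ - 1)).mp h2]

lemma gRem_partial {M : ℕ} {ρ x : ℝ} (hρ : 1 < ρ) :
    ∀ k, x = (∑ i ∈ Finset.range k, (gDig M ρ x i : ℝ) / ρ ^ (i + 1)) + gRem M ρ x k / ρ ^ k := by
  have h0 : (0:ℝ) < ρ := lt_trans one_pos hρ
  intro k
  induction k with
  | zero => simp [gRem]
  | succ k ih =>
    have hrec : gRem M ρ x (k+1) = ρ * gRem M ρ x k - (gDig M ρ x k : ℝ) := rfl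
    have hne : ρ ^ k ≠ 0 := by positivity
    have key : (gDig M ρ x k : ℝ)/ρ^(k+1) + gRem M ρ x (k+1)/ρ^(k+1)
        = gRem M ρ x k / ρ^k := by
      rw [hrec]
      field_simp
      ring
    rw [Finset.sum_range_succ]
    linarith [ih, key]

lemma exists_expansion {M : ℕ} {ρ x : ℝ} (hρ : 1 < ρ) (hρ2 : ρ ≤ M + 1)
    (hx0 : 0 ≤ x) (hx1 : x ≤ M / (ρ - 1)) :
    ∃ d : ℕ → ℕ, (∀ i, d i ≤ M) ∧ piQ ρ d = x := by
  have h0 : (0:ℝ) < ρ := lt_trans one_pos hρ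
  refine ⟨gDig M ρ x, fun i => gDig_le M ρ x i, ?_⟩
  have hsum := summable_piQ (M := M) hρ (fun i => gDig_le M ρ x i)
  have hten : Tendsto (fun k => ∑ i ∈ Finset.range k, (gDig M ρ x i : ℝ) / ρ ^ (i + 1))
      atTop (nhds (piQ ρ (gDig M ρ x))) := hsum.hasSum.tendsto_sum_nat
  have hten2 : Tendsto (fun k => ∑ i ∈ Finset.range k, (gDig M ρ x i : ℝ) / ρ ^ (i + 1))
      atTop (nhds x) := by
    have heq : ∀ k, ∑ i ∈ Finset.range k, (gDig M ρ x i : ℝ) / ρ ^ (i + 1)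
        = x - gRem M ρ x k / ρ ^ k := by
      intro k; have := gRem_partial (M := M) (x := x) hρ k; linarith
    simp only [heq]
    have htend : Tendsto (fun k : ℕ => gRem M ρ x k / ρ ^ k) atTop (nhds 0) := by
      have hb : ∀ k : ℕ, |gRem M ρ x k / ρ ^ k| ≤ (M / (ρ - 1)) * (1/ρ)^k := by
        intro k
        obtain ⟨ha, hb⟩ := gRem_invariant hρ hρ2 hx0 hx1 k
        rw [abs_of_nonneg (by positivity), one_div, inv_pow, div_eq_mul_inv]
        exact mul_le_mul_of_nonneg_right hb (by positivity)
      have hgeo : Tendsto (fun k : ℕ => (M / (ρ - 1)) * (1/ρ)^k) atTop (nhds 0) := by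
        rw [show (0:ℝ) = (M / (ρ - 1)) * 0 by ring]
        exact (tendsto_pow_atTop_nhds_zero_of_lt_one (by positivity)
          (by rw [div_lt_one h0]; exact hρ)).const_mul _
      apply squeeze_zero_norm hb hgeo
    have : Tendsto (fun k : ℕ => x - gRem M ρ x k / ρ ^ k) atTop (nhds (x - 0)) :=
      tendsto_const_nhds.sub htend
    simpa using this
  exact tendsto_nhds_unique hten hten2

def modSeq (a : ℕ → ℕ) (j c : ℕ) (g : ℕ → ℕ) : ℕ → ℕ :=
  fun i => if i < j then a i else if i = j then c else g (i - (j+1))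

lemma modSeq_le {M : ℕ} {a g : ℕ → ℕ} {j c : ℕ} (ha : ∀ i, a i ≤ M) (hc : c ≤ M)
    (hg : ∀ i, g i ≤ M) : ∀ i, modSeq a j c g i ≤ M := by
  intro i; unfold modSeq; split_ifs
  · exact ha i
  · exact hc
  · exact hg _

lemma shift_shift (a : ℕ → ℕ) (j m : ℕ) : shiftSeq (shiftSeq a j) m = shiftSeq a (m + j) := by
  funext i; simp only [shiftSeq]; congr 1; omega

lemma shift_modSeq (a : ℕ → ℕ) (j c : ℕ) (g : ℕ → ℕ) :
    shiftSeq (modSeq a j c g) (j+1) = g := by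
  funext i
  simp only [shiftSeq, modSeq]
  rw [if_neg (by omega), if_neg (by omega)]
  congr 1
  omega

lemma piQ_modSeq {M : ℕ} {ρ : ℝ} (hρ : 1 < ρ) {a g : ℕ → ℕ} {j c : ℕ}
    (ha : ∀ i, a i ≤ M) (hc : c ≤ M) (hg : ∀ i, g i ≤ M) :
    piQ ρ (modSeq a j c g) = (∑ i ∈ Finset.range j, (a i : ℝ) / ρ ^ (i + 1))
      + (c : ℝ)/ρ^(j+1) + piQ ρ g/ρ^(j+1) := by
  have hb := modSeq_le (M := M) (j := j) ha hc hg
  rw [piQ_shift_s15 hρ hb (j+1), shift_modSeq, Finset.sum_range_succ]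
  have h1 : ∀ i ∈ Finset.range j, ((modSeq a j c g i : ℕ) : ℝ) / ρ ^ (i+1)
      = (a i : ℝ) / ρ ^ (i+1) := by
    intro i hi
    rw [Finset.mem_range] at hi
    simp [modSeq, if_pos hi]
  rw [Finset.sum_congr rfl h1]
  have h2 : modSeq a j c g j = c := by simp [modSeq]
  rw [h2]
  ring

lemma geom_partial {ρ : ℝ} (hρ : 1 < ρ) (m : ℕ) :
    ∑ i ∈ Finset.range m, (ρ - 1) / ρ ^ (i + 1) = 1 - (1/ρ)^m := by
  have h0 : (0:ℝ) < ρ := lt_trans one_pos hρ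
  induction m with
  | zero => simp
  | succ m ih =>
    rw [Finset.sum_range_succ, ih]
    have hne : ρ ^ m ≠ 0 := by positivity
    have hne2 : ρ ≠ 0 := by positivity
    rw [one_div, inv_pow, inv_pow, pow_succ]
    field_simp
    ring

section Funiq

variable {M : ℕ} {p : ℝ} {a : ℕ → ℕ}

/-- F0: a univoque base satisfies `M/(p-1) ≤ 2`. -/
lemma F0 (hM : 0 < M) (hp1 : 1 < p) (hp2 : p ≤ M + 1) (ha1 : ∀ i, a i ≤ M)
    (ha2 : piQ p a = 1) (huniq : ∀ e, (∀ i, e i ≤ M) → piQ p e = 1 → e = a) :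
    (M : ℝ) / (p - 1) ≤ 2 := by
  by_contra hcon
  push_neg at hcon
  have h0 : (0:ℝ) < p := lt_trans one_pos hp1
  have hpM : p < M + 1 := by
    rcases lt_or_eq_of_le hp2 with h | h
    · exact h
    · exfalso
      rw [h] at hcon
      have : (M:ℝ) / (M + 1 - 1) = 1 := by
        rw [add_sub_cancel_right, div_self]
        exact_mod_cast hM.ne'
      rw [this] at hcon; linarith
  set d : ℕ := ⌊p⌋₊ with hd
  have hd1 : 1 ≤ d := Nat.le_floor (by exact_mod_cast hp1.le)
  have hdlep : (d : ℝ) ≤ p := Nat.floor_le h0.le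
  have hpd : p < d + 1 := Nat.lt_floor_add_one p
  have hdM : d ≤ M := by
    have : (d:ℝ) < M + 1 := lt_of_le_of_lt hdlep hpM
    exact_mod_cast Nat.lt_succ_iff.mp (by exact_mod_cast this)
  -- first expansion with digit d
  obtain ⟨g, hg1, hg2⟩ := exists_expansion (M := M) hp1 hp2
    (by linarith : (0:ℝ) ≤ p - d) (by linarith : p - (d:ℝ) ≤ M / (p-1))
  -- second expansion with digit d - 1
  obtain ⟨g', hg'1, hg'2⟩ := exists_expansion (M := M) hp1 hp2
    (by push_cast [Nat.cast_sub hd1]; linarith : (0:ℝ) ≤ p - ((d - 1 : ℕ):ℝ))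
    (by push_cast [Nat.cast_sub hd1]; linarith : p - ((d - 1 : ℕ):ℝ) ≤ M / (p-1))
  have he : piQ p (modSeq a 0 d g) = 1 := by
    rw [piQ_modSeq hp1 ha1 hdM hg1]
    simp only [Finset.range_zero, Finset.sum_empty, zero_add, pow_one]
    rw [hg2]
    field_simp
    ring
  have he' : piQ p (modSeq a 0 (d-1) g') = 1 := by
    rw [piQ_modSeq hp1 ha1 (le_trans (Nat.sub_le d 1) hdM) hg'1]
    simp only [Finset.range_zero, Finset.sum_empty, zero_add, pow_one]
    rw [hg'2]
    field_simp
    ring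
  have e1 := huniq _ (modSeq_le ha1 hdM hg1) he
  have e2 := huniq _ (modSeq_le ha1 (le_trans (Nat.sub_le d 1) hdM) hg'1) he'
  have : modSeq a 0 d g 0 = modSeq a 0 (d-1) g' 0 := by rw [e1, e2]
  simp [modSeq] at this
  omega

/-- F1: tails of the unique expansion of 1 have value at most 1. -/
lemma F1 (hM : 0 < M) (hp1 : 1 < p) (hp2 : p ≤ M + 1) (ha1 : ∀ i, a i ≤ M)
    (ha2 : piQ p a = 1) (huniq : ∀ e, (∀ i, e i ≤ M) → piQ p e = 1 → e = a)
    {k : ℕ} (hk : 1 ≤ k) : piQ p (shiftSeq a k) ≤ 1 := by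
  by_contra hcon
  push_neg at hcon
  have h0 : (0:ℝ) < p := lt_trans one_pos hp1
  set v : ℝ := piQ p (shiftSeq a k) with hv
  have hMp : p - 1 ≤ (M:ℝ) := by linarith
  by_cases hex : ∃ j, j ≤ k - 1 ∧ a j < M
  · -- take the largest such j
    obtain ⟨j₁, hj₁le, hj₁P⟩ := hex
    set j₀ := Nat.findGreatest (fun j => a j < M) (k-1) with hj₀
    have hPj₀ : a j₀ < M := Nat.findGreatest_spec (P := fun j => a j < M) hj₁le hj₁P
    have hj₀le : j₀ ≤ k - 1 := Nat.findGreatest_le _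
    have hmax : ∀ i, j₀ < i → i ≤ k - 1 → a i = M := by
      intro i h1 h2
      have hng := Nat.findGreatest_is_greatest (n := k-1) (P := fun j => a j < M) h1 h2
      have := ha1 i
      omega
    set m := k - 1 - j₀ with hm
    have hkm : k = (j₀ + 1) + m := by omega
    -- value of the tail at j₀+1
    set w : ℝ := piQ p (shiftSeq a (j₀+1)) with hw
    have hsplit : w = (∑ i ∈ Finset.range m, ((a (i + (j₀+1)) : ℝ)) / p ^ (i+1))
        + (1/p^m) * v := by
      rw [hw, piQ_shift_s15 (M := M) (d := shiftSeq a (j₀+1)) hp1 (fun i => ha1 _) m,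
        shift_shift, show m + (j₀ + 1) = k from by omega, ← hv]
      simp only [shiftSeq]
    have hdig : ∀ i ∈ Finset.range m, ((a (i + (j₀+1)) : ℝ)) / p ^ (i+1) = (M:ℝ)/p^(i+1) := by
      intro i hi
      rw [Finset.mem_range] at hi
      rw [hmax (i + (j₀+1)) (by omega) (by omega)]
    have hw1 : 1 ≤ w := by
      rw [hsplit, Finset.sum_congr rfl hdig]
      have hgeq : ∑ i ∈ Finset.range m, (M:ℝ)/p^(i+1)
          ≥ ∑ i ∈ Finset.range m, (p - 1)/p^(i+1) := by
        apply Finset.sum_le_sum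
        intro i _
        gcongr
      rw [geom_partial hp1] at hgeq
      have : (1/p^m) * v ≥ (1/p^m) * 1 := by
        apply mul_le_mul_of_nonneg_left hcon.le (by positivity)
      have hpm : (1/p)^m = 1/p^m := by rw [one_div, inv_pow, one_div]
      rw [hpm] at hgeq
      linarith
    have hwle : w ≤ (M:ℝ)/(p-1) := piQ_le hp1 (fun i => ha1 _)
    -- build the competing expansion
    obtain ⟨g, hg1, hg2⟩ := exists_expansion (M := M) hp1 hp2
      (by linarith : (0:ℝ) ≤ w - 1) (by linarith : w - 1 ≤ M/(p-1))
    have hsplita : (1:ℝ) = (∑ i ∈ Finset.range j₀, ((a i : ℝ)) / p ^ (i+1))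
        + (a j₀ : ℝ)/p^(j₀+1) + w/p^(j₀+1) := by
      rw [← ha2, piQ_shift_s15 (M := M) hp1 ha1 (j₀+1), Finset.sum_range_succ, ← hw]
      ring
    have hcomb : ((a j₀ : ℝ)+1)/p^(j₀+1) + (w-1)/p^(j₀+1)
        = (a j₀ : ℝ)/p^(j₀+1) + w/p^(j₀+1) := by
      rw [← add_div, ← add_div]; ring_nf
    have he : piQ p (modSeq a j₀ (a j₀ + 1) g) = 1 := by
      rw [piQ_modSeq hp1 ha1 (by omega) hg1, hg2]
      push_cast
      linarith [hsplita, hcomb]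
    have := huniq _ (modSeq_le ha1 (by omega) hg1) he
    have : modSeq a j₀ (a j₀ + 1) g j₀ = a j₀ := by rw [this]
    simp [modSeq] at this
    try omega
  · -- all digits M before k
    push_neg at hex
    have hall : ∀ i ∈ Finset.range k, ((a i : ℝ)) / p ^ (i+1) = (M:ℝ)/p^(i+1) := by
      intro i hi
      rw [Finset.mem_range] at hi
      have := hex i (by omega)
      have := ha1 i
      have : a i = M := by omega
      rw [this]
    have hsplit : (∑ i ∈ Finset.range k, (M:ℝ) / p ^ (i+1)) + (1/p^k) * v = 1 := by
      have h1 := ha2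
      rw [piQ_shift_s15 (M := M) (d := a) hp1 ha1 k, Finset.sum_congr rfl hall, ← hv] at h1
      exact h1
    have hgeq : ∑ i ∈ Finset.range k, (M:ℝ)/p^(i+1)
        ≥ ∑ i ∈ Finset.range k, (p - 1)/p^(i+1) := by
      apply Finset.sum_le_sum
      intro i _
      gcongr
    rw [geom_partial hp1] at hgeq
    have hv1 : (1/p^k) * v > (1/p^k) * 1 :=
      (mul_lt_mul_iff_right₀ (by positivity)).mpr hcon
    have hpm : (1/p)^k = 1/p^k := by rw [one_div, inv_pow, one_div]
    rw [hpm] at hgeq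
    linarith

/-- F2: tails of the unique expansion of 1 have value at least `M/(p-1) - 1`. -/
lemma F2 (hM : 0 < M) (hp1 : 1 < p) (hp2 : p ≤ M + 1) (ha1 : ∀ i, a i ≤ M)
    (ha2 : piQ p a = 1) (huniq : ∀ e, (∀ i, e i ≤ M) → piQ p e = 1 → e = a)
    (k : ℕ) : (M:ℝ)/(p-1) - 1 ≤ piQ p (shiftSeq a k) := by
  have h0 : (0:ℝ) < p := lt_trans one_pos hp1
  have hF0 := F0 hM hp1 hp2 ha1 ha2 huniq
  rcases Nat.eq_zero_or_pos k with hk0 | hk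
  · have : shiftSeq a k = a := by funext i; simp [shiftSeq, hk0]
    rw [this, ha2]; linarith
  by_contra hcon
  push_neg at hcon
  set v : ℝ := piQ p (shiftSeq a k) with hv
  have hv0 : 0 ≤ v := piQ_nonneg h0 _
  by_cases hex : ∃ j, j ≤ k - 1 ∧ 0 < a j
  · obtain ⟨j₁, hj₁le, hj₁P⟩ := hex
    set j₀ := Nat.findGreatest (fun j => 0 < a j) (k-1) with hj₀
    have hPj₀ : 0 < a j₀ := Nat.findGreatest_spec (P := fun j => 0 < a j) hj₁le hj₁P
    have hj₀le : j₀ ≤ k - 1 := Nat.findGreatest_le _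
    have hmax : ∀ i, j₀ < i → i ≤ k - 1 → a i = 0 := by
      intro i h1 h2
      have hng := Nat.findGreatest_is_greatest (n := k-1) (P := fun j => 0 < a j) h1 h2
      omega
    set m := k - 1 - j₀ with hm
    have hkm : k = (j₀ + 1) + m := by omega
    set w : ℝ := piQ p (shiftSeq a (j₀+1)) with hw
    have hsplit : w = (∑ i ∈ Finset.range m, ((a (i + (j₀+1)) : ℝ)) / p ^ (i+1))
        + (1/p^m) * v := by
      rw [hw, piQ_shift_s15 (M := M) (d := shiftSeq a (j₀+1)) hp1 (fun i => ha1 _) m,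
        shift_shift, show m + (j₀ + 1) = k from by omega, ← hv]
      simp only [shiftSeq]
    have hdig : ∀ i ∈ Finset.range m, ((a (i + (j₀+1)) : ℝ)) / p ^ (i+1) = 0 := by
      intro i hi
      rw [Finset.mem_range] at hi
      rw [hmax (i + (j₀+1)) (by omega) (by omega)]
      simp
    have hwv : w ≤ v := by
      rw [hsplit, Finset.sum_congr rfl hdig]
      simp only [Finset.sum_const, smul_zero, zero_add]
      have h1 : (1:ℝ)/p^m ≤ 1 := by
        rw [div_le_one (by positivity)]
        exact one_le_pow₀ hp1.le
      nlinarith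
    have hw0 : 0 ≤ w := piQ_nonneg h0 _
    obtain ⟨g, hg1, hg2⟩ := exists_expansion (M := M) hp1 hp2
      (by linarith : (0:ℝ) ≤ w + 1) (by linarith : w + 1 ≤ M/(p-1))
    have hsplita : (1:ℝ) = (∑ i ∈ Finset.range j₀, ((a i : ℝ)) / p ^ (i+1))
        + (a j₀ : ℝ)/p^(j₀+1) + w/p^(j₀+1) := by
      rw [← ha2, piQ_shift_s15 (M := M) hp1 ha1 (j₀+1), Finset.sum_range_succ, ← hw]
      ring
    have hcomb : ((a j₀ : ℝ)-1)/p^(j₀+1) + (w+1)/p^(j₀+1)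
        = (a j₀ : ℝ)/p^(j₀+1) + w/p^(j₀+1) := by
      rw [← add_div, ← add_div]; ring_nf
    have he : piQ p (modSeq a j₀ (a j₀ - 1) g) = 1 := by
      rw [piQ_modSeq hp1 ha1 (by have := ha1 j₀; omega) hg1, hg2]
      push_cast [Nat.cast_sub hPj₀]
      linarith [hsplita, hcomb]
    have := huniq _ (modSeq_le ha1 (by have := ha1 j₀; omega) hg1) he
    have : modSeq a j₀ (a j₀ - 1) g j₀ = a j₀ := by rw [this]
    simp [modSeq] at this
    try omega
  · push_neg at hex
    have hall : ∀ i ∈ Finset.range k, ((a i : ℝ)) / p ^ (i+1) = 0 := by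
      intro i hi
      rw [Finset.mem_range] at hi
      have := hex i (by omega)
      have : a i = 0 := by omega
      rw [this]; simp
    have hsplit : (1/p^k) * v = 1 := by
      have h1 := ha2
      rw [piQ_shift_s15 (M := M) (d := a) hp1 ha1 k, Finset.sum_congr rfl hall, ← hv] at h1
      rw [Finset.sum_const_zero, zero_add] at h1
      exact h1
    have h1 : (1:ℝ)/p^k ≤ 1 := by
      rw [div_le_one (by positivity)]
      exact one_le_pow₀ hp1.le
    have hv1 : 1 ≤ v := by nlinarith [mul_le_mul_of_nonneg_right h1 hv0]
    linarith

end Funiq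

lemma pow_succ_diff {p p' : ℝ} (hp : 0 ≤ p) (hpp : p ≤ p') :
    ∀ k : ℕ, p'^(k+1) - p^(k+1) ≤ ((k:ℝ)+1) * p'^k * (p' - p) := by
  intro k
  induction k with
  | zero => simp
  | succ k ih =>
    have hp' : 0 ≤ p' := le_trans hp hpp
    have h1 : p'^(k+1+1) - p^(k+1+1) = p' * (p'^(k+1) - p^(k+1)) + p^(k+1) * (p' - p) := by
      ring
    rw [h1]
    have h2 : p' * (p'^(k+1) - p^(k+1)) ≤ p' * (((k:ℝ)+1) * p'^k * (p' - p)) :=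
      mul_le_mul_of_nonneg_left ih hp'
    have h3 : p^(k+1) * (p' - p) ≤ p'^(k+1) * (p' - p) := by
      apply mul_le_mul_of_nonneg_right (pow_le_pow_left₀ hp hpp _) (by linarith)
    have h4 : p' * (((k:ℝ)+1) * p'^k * (p' - p)) = ((k:ℝ)+1) * p'^(k+1) * (p'-p) := by
      rw [pow_succ]; ring
    push_cast
    nlinarith [h2, h3, h4]

lemma inv_pow_diff {q p p' : ℝ} (hq : 1 < q) (hqp : q ≤ p) (hpp : p ≤ p') (k : ℕ) :
    1/p^(k+1) - 1/p'^(k+1) ≤ ((k:ℝ)+1) * (p' - p) * (1/q^(k+1)) := by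
  have hq0 : (0:ℝ) < q := lt_trans one_pos hq
  have hp0 : (0:ℝ) < p := lt_of_lt_of_le hq0 hqp
  have hp'0 : (0:ℝ) < p' := lt_of_lt_of_le hp0 hpp
  have hp'1 : (1:ℝ) ≤ p' := le_trans (le_trans hq.le hqp) hpp
  have hne : p^(k+1) ≠ 0 := by positivity
  have hne' : p'^(k+1) ≠ 0 := by positivity
  have key := pow_succ_diff hp0.le hpp k
  have h1 : 1/p^(k+1) - 1/p'^(k+1) = (p'^(k+1) - p^(k+1))/(p^(k+1) * p'^(k+1)) := by
    field_simp
  rw [h1]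
  have h2 : (p'^(k+1) - p^(k+1))/(p^(k+1) * p'^(k+1))
      ≤ (((k:ℝ)+1) * p'^k * (p' - p))/(p^(k+1) * p'^(k+1)) := by
    apply div_le_div_of_nonneg_right key (by positivity) |>.trans_eq rfl
  have h3 : (((k:ℝ)+1) * p'^k * (p' - p))/(p^(k+1) * p'^(k+1))
      = (((k:ℝ)+1) * (p' - p))/(p^(k+1) * p') := by
    rw [pow_succ p' k]
    have : p'^k ≠ 0 := by positivity
    field_simp
  have h4 : (((k:ℝ)+1) * (p' - p))/(p^(k+1) * p') ≤ (((k:ℝ)+1) * (p' - p))/(q^(k+1) * 1) := by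
    apply div_le_div_of_nonneg_left (by nlinarith [sub_nonneg.mpr hpp]) (by positivity)
    · calc q^(k+1) * 1 = q^(k+1) := mul_one _
      _ ≤ p^(k+1) := pow_le_pow_left₀ hq0.le hqp _
      _ ≤ p^(k+1) * p' := le_mul_of_one_le_right (by positivity) hp'1
  calc (p'^(k+1) - p^(k+1))/(p^(k+1) * p'^(k+1))
      ≤ (((k:ℝ)+1) * (p' - p))/(p^(k+1) * p') := by rw [← h3]; exact h2
    _ ≤ (((k:ℝ)+1) * (p' - p))/(q^(k+1) * 1) := h4
    _ = ((k:ℝ)+1) * (p' - p) * (1/q^(k+1)) := by rw [mul_one]; ring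

section Dsum

lemma summable_D {x : ℝ} (h0 : 0 ≤ x) (h1 : x < 1) :
    Summable (fun k : ℕ => (k:ℝ) * x^k) := by
  have := summable_pow_mul_geometric_of_norm_lt_one (R := ℝ) 1
    (r := x) (by rwa [Real.norm_eq_abs, abs_of_nonneg h0])
  simpa using this

lemma D_nonneg {x : ℝ} (h0 : 0 ≤ x) : 0 ≤ ∑' k : ℕ, (k:ℝ) * x^k :=
  tsum_nonneg (fun k => by positivity)

lemma sumD_le {x : ℝ} (h0 : 0 ≤ x) (h1 : x < 1) (n : ℕ) :
    ∑ i ∈ Finset.range n, ((i:ℝ)+1) * x^(i+1) ≤ ∑' k : ℕ, (k:ℝ) * x^k := by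
  have hs := summable_D h0 h1
  have key : ∑ i ∈ Finset.range n, ((i:ℝ)+1) * x^(i+1)
      = ∑ k ∈ Finset.range (n+1), (k:ℝ) * x^k := by
    rw [Finset.sum_range_succ' (fun k => (k:ℝ) * x^k) n]
    push_cast
    simp
  rw [key]
  exact Summable.sum_le_tsum _ (fun i _ => by positivity) hs

lemma termD_le {x : ℝ} (h0 : 0 ≤ x) (h1 : x < 1) (n : ℕ) :
    ((n:ℝ)+1) * x^(n+1) ≤ ∑' k : ℕ, (k:ℝ) * x^k := by
  have hs := summable_D h0 h1
  have : ((n+1:ℕ):ℝ) * x^(n+1) ≤ ∑' k : ℕ, (k:ℝ) * x^k :=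
    Summable.le_tsum hs (n+1) (fun j _ => by positivity)
  push_cast at this
  exact this

end Dsum

set_option maxHeartbeats 1000000 in
/-- Key estimate: the projections in base `M+1` of unique expansions are
Lipschitz in the base. -/
lemma key_dist {M : ℕ} (hM : 0 < M) {q r p p' : ℝ}
    (hq1 : 1 < q) (hrM : r < (M:ℝ) + 1)
    (hqp : q < p) (hpp : p < p') (hp'r : p' < r)
    (hp2 : p ≤ (M:ℝ) + 1) (hp'2 : p' ≤ (M:ℝ) + 1)
    {a b : ℕ → ℕ}
    (ha1 : ∀ i, a i ≤ M) (ha2 : piQ p a = 1)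
    (hauniq : ∀ e, (∀ i, e i ≤ M) → piQ p e = 1 → e = a)
    (hb1 : ∀ i, b i ≤ M) (hb2 : piQ p' b = 1)
    (hbuniq : ∀ e, (∀ i, e i ≤ M) → piQ p' e = 1 → e = b) :
    |piQ ((M:ℝ)+1) a - piQ ((M:ℝ)+1) b|
      ≤ (r * (2*(M:ℝ)+1) * (∑' k : ℕ, (k:ℝ) * (1/q)^k) / ((M:ℝ)/(r-1) - 1)) * (p' - p) := by
  have hq0 : (0:ℝ) < q := lt_trans one_pos hq1
  have hp1 : 1 < p := lt_trans hq1 hqp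
  have hp'1 : 1 < p' := lt_trans hp1 hpp
  have hr1 : 1 < r := lt_trans hp'1 hp'r
  have hp0 : (0:ℝ) < p := lt_trans one_pos hp1
  have hp'0 : (0:ℝ) < p' := lt_trans one_pos hp'1
  have hr0 : (0:ℝ) < r := lt_trans one_pos hr1
  set x : ℝ := 1/q with hx
  have hx0 : 0 ≤ x := by positivity
  have hx1 : x < 1 := by rw [hx, div_lt_one hq0]; exact hq1
  set D : ℝ := ∑' k : ℕ, (k:ℝ) * x^k with hD
  have hD0 : 0 ≤ D := D_nonneg hx0
  set μ : ℝ := (M:ℝ)/(r-1) - 1 with hμ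
  have hμ0 : 0 < μ := by
    rw [hμ, sub_pos, lt_div_iff₀ (by linarith)]
    linarith
  set Δ : ℝ := p' - p with hΔ
  have hΔ0 : 0 < Δ := by rw [hΔ]; linarith
  -- a ≠ b
  have hne : a ≠ b := by
    intro h
    subst h
    have hex : ∃ i, a i ≠ 0 := by
      by_contra hno
      push_neg at hno
      have : piQ p a = 0 := by
        rw [piQ]
        convert tsum_zero with i
        rw [hno i]
        simp
      rw [this] at ha2; exact zero_ne_one ha2
    obtain ⟨i₀, hi₀⟩ := hex
    have hterm : ∀ i, (a i:ℝ)/p'^(i+1) ≤ (a i:ℝ)/p^(i+1) := fun i =>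
      div_le_div_of_nonneg_left (Nat.cast_nonneg _) (by positivity)
        (pow_le_pow_left₀ hp0.le hpp.le _)
    have hnum : (0:ℝ) < (a i₀ : ℝ) := by
      have : 1 ≤ a i₀ := Nat.one_le_iff_ne_zero.mpr hi₀
      exact_mod_cast lt_of_lt_of_le one_pos (by exact_mod_cast this)
    have hstrict : (a i₀:ℝ)/p'^(i₀+1) < (a i₀:ℝ)/p^(i₀+1) := by
      apply div_lt_div_of_pos_left hnum (by positivity)
      exact pow_lt_pow_left₀ hpp hp0.le (by omega)
    have hlt : piQ p' a < piQ p a :=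
      Summable.tsum_lt_tsum hterm hstrict (summable_piQ hp'1 ha1) (summable_piQ hp1 ha1)
    rw [ha2, hb2] at hlt
    exact lt_irrefl 1 hlt
  have hdiff : ∃ i, a i ≠ b i := by
    by_contra hno
    push_neg at hno
    exact hne (funext hno)
  set n : ℕ := Nat.find hdiff with hn
  have hnspec : a n ≠ b n := Nat.find_spec hdiff
  have hnmin : ∀ i < n, a i = b i := fun i hi => not_not.mp (Nat.find_min hdiff hi)
  -- tail values
  set A : ℝ := piQ p (shiftSeq a n) with hA
  set B : ℝ := piQ p' (shiftSeq b n) with hB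
  set A' : ℝ := piQ p (shiftSeq a (n+1)) with hA'
  set B' : ℝ := piQ p' (shiftSeq b (n+1)) with hB'
  have hA0 : 0 ≤ A := piQ_nonneg hp0 _
  have hB0 : 0 ≤ B := piQ_nonneg hp'0 _
  have hA'0 : 0 ≤ A' := piQ_nonneg hp0 _
  have hB'0 : 0 ≤ B' := piQ_nonneg hp'0 _
  -- splits
  have hasplit : (∑ i ∈ Finset.range n, (a i:ℝ)/p^(i+1)) + (1/p^n) * A = 1 := by
    have h1 := ha2
    rw [piQ_shift_s15 (M := M) (d := a) hp1 ha1 n, ← hA] at h1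
    exact h1
  have hbsplit : (∑ i ∈ Finset.range n, (a i:ℝ)/p'^(i+1)) + (1/p'^n) * B = 1 := by
    have h1 := hb2
    rw [piQ_shift_s15 (M := M) (d := b) hp'1 hb1 n, ← hB] at h1
    have hsum_eq : ∑ i ∈ Finset.range n, (b i:ℝ)/p'^(i+1)
        = ∑ i ∈ Finset.range n, (a i:ℝ)/p'^(i+1) := by
      apply Finset.sum_congr rfl
      intro i hi
      rw [Finset.mem_range] at hi
      rw [hnmin i hi]
    rw [hsum_eq] at h1
    exact h1
  -- one-step recursions
  have honeA : A = ((a n : ℝ) + A')/p := by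
    rw [hA, piQ_shift_s15 (M := M) (d := shiftSeq a n) hp1 (fun i => ha1 _) 1,
      shift_shift, Finset.sum_range_one, pow_one]
    rw [show (1:ℕ) + n = n + 1 from by omega, ← hA']
    simp only [shiftSeq, Nat.zero_add]
    rw [mul_comm (1/_ : ℝ), mul_one_div, ← add_div]
  have honeB : B = ((b n : ℝ) + B')/p' := by
    rw [hB, piQ_shift_s15 (M := M) (d := shiftSeq b n) hp'1 (fun i => hb1 _) 1,
      shift_shift, Finset.sum_range_one, pow_one]
    rw [show (1:ℕ) + n = n + 1 from by omega, ← hB']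
    simp only [shiftSeq, Nat.zero_add]
    rw [mul_comm (1/_ : ℝ), mul_one_div, ← add_div]
  -- bounds from univoque structure
  have hA'1 : A' ≤ 1 := F1 hM hp1 hp2 ha1 ha2 hauniq (by omega)
  have hB'1 : B' ≤ 1 := F1 hM hp'1 hp'2 hb1 hb2 hbuniq (by omega)
  have hB'μ : μ ≤ B' := by
    have h1 := F2 hM hp'1 hp'2 hb1 hb2 hbuniq (n+1)
    rw [← hB'] at h1
    have h2 : (M:ℝ)/(r-1) ≤ (M:ℝ)/(p'-1) := by
      apply div_le_div_of_nonneg_left (Nat.cast_nonneg _) (by linarith) (by linarith)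
    rw [hμ]; linarith
  -- the classic subtraction bound
  have hL0 : 0 ≤ (1/p'^n) * B - (1/p^n) * A := by
    have hterm : ∀ i ∈ Finset.range n, (a i:ℝ)/p'^(i+1) ≤ (a i:ℝ)/p^(i+1) := by
      intro i _
      exact div_le_div_of_nonneg_left (Nat.cast_nonneg _) (by positivity)
        (pow_le_pow_left₀ hp0.le hpp.le _)
    have := Finset.sum_le_sum hterm
    linarith
  have hLup : (1/p'^n) * B - (1/p^n) * A ≤ (M:ℝ) * D * Δ := by
    have hterm : ∀ i ∈ Finset.range n,
        (a i:ℝ)/p^(i+1) - (a i:ℝ)/p'^(i+1) ≤ (M:ℝ) * Δ * (((i:ℝ)+1) * x^(i+1)) := by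
      intro i _
      have hinv := inv_pow_diff hq1 hqp.le hpp.le i
      have h1 : (a i:ℝ)/p^(i+1) - (a i:ℝ)/p'^(i+1)
          = (a i:ℝ) * (1/p^(i+1) - 1/p'^(i+1)) := by ring
      rw [h1]
      have h2 : (a i:ℝ) * (1/p^(i+1) - 1/p'^(i+1)) ≤ (M:ℝ) * (1/p^(i+1) - 1/p'^(i+1)) := by
        apply mul_le_mul_of_nonneg_right (by exact_mod_cast ha1 i)
        have : p^(i+1) ≤ p'^(i+1) := pow_le_pow_left₀ hp0.le hpp.le _
        have h3 : 1/p'^(i+1) ≤ 1/p^(i+1) := by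
          apply div_le_div_of_nonneg_left one_pos.le (by positivity) this
        linarith
      have h4 : (M:ℝ) * (1/p^(i+1) - 1/p'^(i+1)) ≤ (M:ℝ) * (((i:ℝ)+1) * Δ * (1/q^(i+1))) :=
        mul_le_mul_of_nonneg_left hinv (Nat.cast_nonneg _)
      have h5 : (M:ℝ) * (((i:ℝ)+1) * Δ * (1/q^(i+1))) = (M:ℝ) * Δ * (((i:ℝ)+1) * x^(i+1)) := by
        rw [show x^(i+1) = 1/q^(i+1) from by rw [hx, one_div, inv_pow, one_div]]
        ring
      linarith
    have hsum := Finset.sum_le_sum hterm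
    rw [← Finset.mul_sum] at hsum
    have hsumD := sumD_le hx0 hx1 n
    have hmain : ∑ i ∈ Finset.range n, ((a i:ℝ)/p^(i+1) - (a i:ℝ)/p'^(i+1))
        ≤ (M:ℝ) * D * Δ := by
      calc ∑ i ∈ Finset.range n, ((a i:ℝ)/p^(i+1) - (a i:ℝ)/p'^(i+1))
          ≤ (M:ℝ) * Δ * ∑ i ∈ Finset.range n, (((i:ℝ)+1) * x^(i+1)) := hsum
        _ ≤ (M:ℝ) * Δ * D := mul_le_mul_of_nonneg_left hsumD (by positivity)
        _ = (M:ℝ) * D * Δ := by ring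
    rw [Finset.sum_sub_distrib] at hmain
    linarith [hasplit, hbsplit, hmain]
  -- main case analysis
  rcases lt_trichotomy (a n) (b n) with hab | hab | hab
  swap
  · exact absurd hab hnspec
  swap
  · -- impossible: b n < a n
    exfalso
    have hAA : ((b n : ℝ) + 1)/p ≤ A := by
      rw [honeA]
      have hcast : (b n : ℝ) + 1 ≤ (a n : ℝ) := by exact_mod_cast hab
      exact (div_le_div_iff_of_pos_right hp0).mpr (by linarith)
    have hBB : B ≤ ((b n : ℝ) + 1)/p' := by
      rw [honeB]
      exact (div_le_div_iff_of_pos_right hp'0).mpr (by linarith)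
    have hbn1 : (0:ℝ) < (b n : ℝ) + 1 := by positivity
    have hpow : p^(n+1) < p'^(n+1) := pow_lt_pow_left₀ hpp hp0.le (by omega)
    have h1 : (1/p'^n) * B ≤ ((b n:ℝ)+1)/p'^(n+1) := by
      rw [pow_succ]
      calc (1/p'^n) * B ≤ (1/p'^n) * (((b n : ℝ) + 1)/p') :=
            mul_le_mul_of_nonneg_left hBB (by positivity)
        _ = ((b n:ℝ)+1)/(p'^n * p') := by field_simp
    have h2 : ((b n:ℝ)+1)/p^(n+1) ≤ (1/p^n) * A := by
      rw [pow_succ]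
      calc ((b n:ℝ)+1)/(p^n * p) = (1/p^n) * (((b n : ℝ) + 1)/p) := by field_simp
        _ ≤ (1/p^n) * A := mul_le_mul_of_nonneg_left hAA (by positivity)
    have h3 : ((b n:ℝ)+1)/p'^(n+1) < ((b n:ℝ)+1)/p^(n+1) :=
      div_lt_div_of_pos_left hbn1 (by positivity) hpow
    linarith
  -- real case: a n < b n
  have han1 : (a n : ℝ) + 1 ≤ (b n : ℝ) := by exact_mod_cast hab
  have hBB : ((a n : ℝ) + 1 + μ)/p' ≤ B := by
    rw [honeB]
    exact (div_le_div_iff_of_pos_right hp'0).mpr (by linarith)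
  have hAA : A ≤ ((a n : ℝ) + 1)/p := by
    rw [honeA]
    exact (div_le_div_iff_of_pos_right hp0).mpr (by linarith)
  have hstep : μ/p'^(n+1) ≤ Δ * ((2*(M:ℝ)+1) * D) := by
    have h1 : (1/p'^n) * B ≥ ((a n:ℝ)+1+μ)/p'^(n+1) := by
      rw [pow_succ]
      calc ((a n:ℝ)+1+μ)/(p'^n * p') = (1/p'^n) * (((a n:ℝ)+1+μ)/p') := by field_simp
        _ ≤ (1/p'^n) * B := mul_le_mul_of_nonneg_left hBB (by positivity)
    have h2 : (1/p^n) * A ≤ ((a n:ℝ)+1)/p^(n+1) := by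
      rw [pow_succ]
      calc (1/p^n) * A ≤ (1/p^n) * (((a n:ℝ)+1)/p) :=
            mul_le_mul_of_nonneg_left hAA (by positivity)
        _ = ((a n:ℝ)+1)/(p^n * p) := by field_simp
    have h3 : ((a n:ℝ)+1+μ)/p'^(n+1) - ((a n:ℝ)+1)/p^(n+1) ≤ (M:ℝ) * D * Δ := by
      linarith
    have h4 : ((a n:ℝ)+1+μ)/p'^(n+1) = μ/p'^(n+1) + ((a n:ℝ)+1)/p'^(n+1) := by
      rw [← add_div]; ring_nf
    have h5 : ((a n:ℝ)+1)/p^(n+1) - ((a n:ℝ)+1)/p'^(n+1)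
        ≤ ((M:ℝ)+1) * (((n:ℝ)+1) * Δ * (1/q^(n+1))) := by
      have hinv := inv_pow_diff hq1 hqp.le hpp.le n
      have h6 : ((a n:ℝ)+1)/p^(n+1) - ((a n:ℝ)+1)/p'^(n+1)
          = ((a n:ℝ)+1) * (1/p^(n+1) - 1/p'^(n+1)) := by ring
      rw [h6]
      have h7 : ((a n:ℝ)+1) ≤ (M:ℝ)+1 := by
        have := ha1 n
        have : (a n : ℝ) ≤ M := by exact_mod_cast this
        linarith
      have h8 : 0 ≤ 1/p^(n+1) - 1/p'^(n+1) := by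
        have : p^(n+1) ≤ p'^(n+1) := pow_le_pow_left₀ hp0.le hpp.le _
        have := div_le_div_of_nonneg_left one_pos.le (by positivity : (0:ℝ) < p^(n+1)) this
        linarith
      calc ((a n:ℝ)+1) * (1/p^(n+1) - 1/p'^(n+1))
          ≤ ((M:ℝ)+1) * (1/p^(n+1) - 1/p'^(n+1)) := mul_le_mul_of_nonneg_right h7 h8
        _ ≤ ((M:ℝ)+1) * (((n:ℝ)+1) * Δ * (1/q^(n+1))) :=
            mul_le_mul_of_nonneg_left hinv (by positivity)
    have h9 : ((n:ℝ)+1) * (1/q^(n+1)) ≤ D := by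
      have := termD_le hx0 hx1 n
      rw [hx] at this
      rw [show ((1:ℝ)/q)^(n+1) = 1/q^(n+1) from by rw [one_div, inv_pow, one_div]] at this
      exact this
    have h10 : ((M:ℝ)+1) * (((n:ℝ)+1) * Δ * (1/q^(n+1))) ≤ ((M:ℝ)+1) * Δ * D := by
      calc ((M:ℝ)+1) * (((n:ℝ)+1) * Δ * (1/q^(n+1)))
          = (((M:ℝ)+1) * Δ) * (((n:ℝ)+1) * (1/q^(n+1))) := by ring
        _ ≤ (((M:ℝ)+1) * Δ) * D := mul_le_mul_of_nonneg_left h9 (by positivity)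
        _ = ((M:ℝ)+1) * Δ * D := by ring
    have hring : Δ * ((2*(M:ℝ)+1) * D) = (M:ℝ) * D * Δ + ((M:ℝ)+1) * Δ * D := by ring
    linarith [h3, h4, h5, h10, hring]
  -- convert to r
  have hrstep : μ/r^(n+1) ≤ Δ * ((2*(M:ℝ)+1) * D) := by
    have : μ/r^(n+1) ≤ μ/p'^(n+1) := by
      apply div_le_div_of_nonneg_left hμ0.le (by positivity)
      exact pow_le_pow_left₀ hp'0.le hp'r.le _
    linarith
  -- estimate the projections in base M+1
  have hM1 : (1:ℝ) < (M:ℝ) + 1 := by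
    have : (1:ℝ) ≤ (M:ℝ) := by exact_mod_cast hM
    linarith
  have hM0 : (0:ℝ) < (M:ℝ) + 1 := lt_trans one_pos hM1
  set A₂ : ℝ := piQ ((M:ℝ)+1) (shiftSeq a n) with hA₂
  set B₂ : ℝ := piQ ((M:ℝ)+1) (shiftSeq b n) with hB₂
  have hA₂0 : 0 ≤ A₂ := piQ_nonneg hM0 _
  have hB₂0 : 0 ≤ B₂ := piQ_nonneg hM0 _
  have hMM : (M:ℝ)/((M:ℝ)+1-1) = 1 := by
    rw [add_sub_cancel_right]
    exact div_self (by exact_mod_cast hM.ne')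
  have hA₂1 : A₂ ≤ 1 := by
    have := piQ_le (M := M) (d := shiftSeq a n) hM1 (fun i => ha1 _)
    rw [hMM] at this
    exact this
  have hB₂1 : B₂ ≤ 1 := by
    have := piQ_le (M := M) (d := shiftSeq b n) hM1 (fun i => hb1 _)
    rw [hMM] at this
    exact this
  have hsplit2a : piQ ((M:ℝ)+1) a
      = (∑ i ∈ Finset.range n, (a i:ℝ)/((M:ℝ)+1)^(i+1)) + (1/((M:ℝ)+1)^n) * A₂ :=
    piQ_shift_s15 (M := M) hM1 ha1 n
  have hsplit2b : piQ ((M:ℝ)+1) b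
      = (∑ i ∈ Finset.range n, (a i:ℝ)/((M:ℝ)+1)^(i+1)) + (1/((M:ℝ)+1)^n) * B₂ := by
    rw [piQ_shift_s15 (M := M) (d := b) hM1 hb1 n, ← hB₂]
    congr 1
    apply Finset.sum_congr rfl
    intro i hi
    rw [Finset.mem_range] at hi
    rw [hnmin i hi]
  have hdiffbound : |piQ ((M:ℝ)+1) a - piQ ((M:ℝ)+1) b| ≤ 1/((M:ℝ)+1)^n := by
    rw [hsplit2a, hsplit2b]
    have h1 : (∑ i ∈ Finset.range n, (a i:ℝ)/((M:ℝ)+1)^(i+1)) + (1/((M:ℝ)+1)^n) * A₂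
        - ((∑ i ∈ Finset.range n, (a i:ℝ)/((M:ℝ)+1)^(i+1)) + (1/((M:ℝ)+1)^n) * B₂)
        = (1/((M:ℝ)+1)^n) * (A₂ - B₂) := by ring
    rw [h1, abs_mul]
    have h2 : |(1:ℝ)/((M:ℝ)+1)^n| = 1/((M:ℝ)+1)^n := abs_of_pos (by positivity)
    rw [h2]
    have h3 : |A₂ - B₂| ≤ 1 := abs_sub_le_iff.mpr ⟨by linarith, by linarith⟩
    calc (1/((M:ℝ)+1)^n) * |A₂ - B₂| ≤ (1/((M:ℝ)+1)^n) * 1 :=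
          mul_le_mul_of_nonneg_left h3 (by positivity)
      _ = 1/((M:ℝ)+1)^n := mul_one _
  -- finish
  have hpowr : 1/((M:ℝ)+1)^n ≤ 1/r^n := by
    apply div_le_div_of_nonneg_left one_pos.le (by positivity)
    exact pow_le_pow_left₀ hr0.le (by linarith) _
  have hfin : 1/r^n ≤ (r * (2*(M:ℝ)+1) * D / μ) * Δ := by
    have h1 : 1/r^n = r * (1/r^(n+1)) := by
      rw [pow_succ]
      field_simp
    have h2 : 1/r^(n+1) ≤ Δ * ((2*(M:ℝ)+1) * D) / μ := by
      rw [le_div_iff₀ hμ0]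
      calc 1/r^(n+1) * μ = μ/r^(n+1) := by ring
        _ ≤ Δ * ((2*(M:ℝ)+1) * D) := hrstep
    calc 1/r^n = r * (1/r^(n+1)) := h1
      _ ≤ r * (Δ * ((2*(M:ℝ)+1) * D) / μ) := mul_le_mul_of_nonneg_left h2 hr0.le
      _ = (r * (2*(M:ℝ)+1) * D / μ) * Δ := by field_simp
  calc |piQ ((M:ℝ)+1) a - piQ ((M:ℝ)+1) b| ≤ 1/((M:ℝ)+1)^n := hdiffbound
    _ ≤ 1/r^n := hpowr
    _ ≤ (r * (2*(M:ℝ)+1) * D / μ) * Δ := hfin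


set_option maxHeartbeats 1000000 in
/-- For `q ∈ U` with `q ≠ M+1` and `r ∈ (q, M+1)`:
`dim_H (U ∩ (q, r)) ≥ dim_H π_{M+1}({α(p) : p ∈ U ∩ (q, r)})`. -/
theorem stmt15 (M : ℕ) (hM : 0 < M) (q : ℝ) (hqU : q ∈ UnivBases M)
    (hne : q ≠ (M : ℝ) + 1) (r : ℝ) (hr : r ∈ Ioo q ((M : ℝ) + 1)) :
    dimH {x : ℝ | ∃ p ∈ UnivBases M ∩ Ioo q r,
        ∃ a : ℕ → ℕ, IsQuasiGreedy M p a ∧ x = piQ ((M : ℝ) + 1) a}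
      ≤ dimH (UnivBases M ∩ Ioo q r) := by
  classical
  have hq1 : 1 < q := hqU.1
  obtain ⟨hrq, hrM⟩ := hr
  have hq0 : (0:ℝ) < q := lt_trans one_pos hq1
  have hr1 : 1 < r := lt_trans hq1 hrq
  have hr0 : (0:ℝ) < r := lt_trans one_pos hr1
  set D : ℝ := ∑' k : ℕ, (k:ℝ) * (1/q)^k with hD
  have hD0 : 0 ≤ D := D_nonneg (by positivity)
  set μ : ℝ := (M:ℝ)/(r-1) - 1 with hμ
  have hμ0 : 0 < μ := by
    rw [hμ, sub_pos, lt_div_iff₀ (by linarith)]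
    linarith
  set K : ℝ := r * (2*(M:ℝ)+1) * D / μ with hK
  have hK0 : 0 ≤ K := by
    apply div_nonneg _ hμ0.le
    apply mul_nonneg _ hD0
    positivity
  set S : Set ℝ := UnivBases M ∩ Ioo q r with hS
  set F : ℝ → ℝ := fun ρ =>
    if h : ∃! d : ℕ → ℕ, IsExpansion M ρ 1 d then piQ ((M:ℝ)+1) h.choose else 0 with hF
  have hFeq : ∀ ρ, ρ ∈ UnivBases M → ∀ c : ℕ → ℕ, IsExpansion M ρ 1 c
      → F ρ = piQ ((M:ℝ)+1) c := by
    intro ρ hρ c hc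
    have h : ∃! d : ℕ → ℕ, IsExpansion M ρ 1 d := hρ.2.2
    rw [hF]
    simp only [dif_pos h]
    rw [h.choose_spec.2 c hc]
  have hsub : {x : ℝ | ∃ p ∈ UnivBases M ∩ Ioo q r,
      ∃ a : ℕ → ℕ, IsQuasiGreedy M p a ∧ x = piQ ((M : ℝ) + 1) a} ⊆ F '' S := by
    rintro x ⟨p, hpS, a, hqg, rfl⟩
    exact ⟨p, hpS, hFeq p hpS.1 a hqg.1⟩
  have main : ∀ u v, u ∈ S → v ∈ S → u < v → dist (F u) (F v) ≤ K * dist u v := by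
    intro u v hu hv huv
    have hU : ∃! d : ℕ → ℕ, IsExpansion M u 1 d := hu.1.2.2
    have hV : ∃! d : ℕ → ℕ, IsExpansion M v 1 d := hv.1.2.2
    have hFu : F u = piQ ((M:ℝ)+1) hU.choose := hFeq u hu.1 hU.choose hU.choose_spec.1
    have hFv : F v = piQ ((M:ℝ)+1) hV.choose := hFeq v hv.1 hV.choose hV.choose_spec.1
    have hukey := key_dist hM hq1 hrM hu.2.1 huv hv.2.2 hu.1.2.1 hv.1.2.1
      hU.choose_spec.1.1 hU.choose_spec.1.2
      (fun e h1 h2 => hU.choose_spec.2 e ⟨h1, h2⟩)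
      hV.choose_spec.1.1 hV.choose_spec.1.2
      (fun e h1 h2 => hV.choose_spec.2 e ⟨h1, h2⟩)
    rw [Real.dist_eq, Real.dist_eq, hFu, hFv]
    have hdist : |u - v| = v - u := by rw [abs_sub_comm]; exact abs_of_pos (by linarith)
    rw [hdist]
    exact hukey
  have hlip : LipschitzOnWith (Real.toNNReal K) F S := by
    apply LipschitzOnWith.of_dist_le_mul
    intro y hy z hz
    have hcoe : ((Real.toNNReal K : NNReal) : ℝ) = K := Real.coe_toNNReal _ hK0
    rw [hcoe]
    rcases lt_trichotomy y z with hyz | hyz | hyz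
    · exact main y z hy hz hyz
    · subst hyz
      simp only [dist_self, mul_zero]
      exact le_refl 0
    · rw [dist_comm (F y) (F z), dist_comm y z]
      exact main z y hz hy hyz
  calc dimH {x : ℝ | ∃ p ∈ UnivBases M ∩ Ioo q r,
        ∃ a : ℕ → ℕ, IsQuasiGreedy M p a ∧ x = piQ ((M : ℝ) + 1) a}
      ≤ dimH (F '' S) := dimH_mono hsub
    _ ≤ dimH S := hlip.dimH_image_le

end
end
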